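/- arXiv:2008.08153 — 4 statements merged into one kernel-verified Lean document; each statement's English description precedes it below -/
import Mathlib

section
/- If v is a well-behaved absolute value on a field K and L/K is a finite extension, then every absolute value w on L extending v is also well-behaved. -/
noncomputable section

open scoped Classical

universe u

section AbsDefs

variable {K : Type u} [Field K] {L : Type u} [Field L]

/-- The restriction (pullback) of an absolute value along `algebraMap K L`. -/
def comapAbs [Algebra K L] (w : AbsoluteValue L ℝ) : AbsoluteValue K ℝ where
  toFun x := w (algebraMap K L x)
  map_mul' x y := by simp
  nonneg' x := w.nonneg _
  eq_zero' x := by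
    rw [w.eq_zero, map_eq_zero_iff _ (algebraMap K L).injective]
  add_le' x y := by simpa using w.add_le (algebraMap K L x) (algebraMap K L y)

/-- `algebraMap K L` viewed as a ring homomorphism `WithAbs v →+* WithAbs w`. -/
def algWithAbs [Algebra K L] (v : AbsoluteValue K ℝ) (w : AbsoluteValue L ℝ) :
    WithAbs v →+* WithAbs w :=
  ((WithAbs.equiv w).symm.toRingHom.comp (algebraMap K L)).comp
    (WithAbs.equiv v).toRingHom

/-- The induced ring homomorphism `K_v →+* L_w` between completions, when `w` extends `v`. -/
def extCompletionHom [Algebra K L] (v : AbsoluteValue K ℝ) (w : AbsoluteValue L ℝ)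
    (h : ∀ x, w (algebraMap K L x) = v x) : v.Completion →+* w.Completion :=
  UniformSpace.Completion.mapRingHom (algWithAbs v w)
    (AddMonoidHomClass.isometry_of_norm (algWithAbs v w) (fun x => h x.ofAbs)).continuous

/-- The local degree `[L_w : K_v]` of an extension `w` of `v`. -/
def localDegree [Algebra K L] (v : AbsoluteValue K ℝ) (w : AbsoluteValue L ℝ)
    (h : ∀ x, w (algebraMap K L x) = v x) : ℕ :=
  letI : Algebra v.Completion w.Completion := (extCompletionHom v w h).toAlgebra
  Module.finrank v.Completion w.Completion

/-- An absolute value is well-behaved if for every finite extension `L/K` the degree formula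
`[L:K] = Σ_{w | v} [L_w : K_v]` holds. -/
def IsWellBehaved (K : Type u) [Field K] (v : AbsoluteValue K ℝ) : Prop :=
  ∀ (L : Type u) [Field L] [Algebra K L], FiniteDimensional K L →
    (Module.finrank K L : ℕ) =
      ∑ᶠ w : {w : AbsoluteValue L ℝ // ∀ x, w (algebraMap K L x) = v x},
        localDegree v w.1 w.2

/-- Non-triviality of an absolute value. -/
def IsNontrivialAbs (v : AbsoluteValue K ℝ) : Prop := ∃ x : K, x ≠ 0 ∧ v x ≠ 1

/-- Non-archimedean absolute value. -/
def IsNonarchAbs (v : AbsoluteValue K ℝ) : Prop := ∀ x y, v (x + y) ≤ max (v x) (v y)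

/-- Two absolute values are equivalent if they define the same topology; equivalently, they
have the same open unit balls. -/
def AbsEquivalent (v w : AbsoluteValue K ℝ) : Prop := ∀ x, v x < 1 ↔ w x < 1

/-- A proper absolute value: non-trivial, well-behaved, and in characteristic zero its
restriction to `ℚ` is equivalent to the trivial, a `p`-adic, or the usual absolute value. -/
def IsProperAbs (v : AbsoluteValue K ℝ) : Prop :=
  IsNontrivialAbs v ∧ IsWellBehaved K v ∧
  ∀ (_ : CharZero K),
    (∀ q : ℚ, q ≠ 0 → ¬ v (q : K) < 1) ∨
    (∃ p : ℕ, p.Prime ∧ ∀ q : ℚ, (v (q : K) < 1 ↔ (padicNorm p q : ℝ) < 1)) ∨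
    (∀ q : ℚ, v (q : K) < 1 ↔ |(q : ℝ)| < 1)

/-- A proper set of absolute values. -/
def IsProperAbsSet (M : Set (AbsoluteValue K ℝ)) : Prop :=
  M.Nonempty ∧ (∀ v ∈ M, IsProperAbs v) ∧
  (M.Pairwise fun v w => ¬ AbsEquivalent v w) ∧
  ∀ x : K, x ≠ 0 → {v ∈ M | v x ≠ 1}.Finite

end AbsDefs
section Stage1

open UniformSpace Filter

theorem WithAbs.norm_eq_abs' {R : Type*} [Field R] (v : AbsoluteValue R ℝ) (x : WithAbs v) :
    ‖x‖ = v x.ofAbs := rfl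

instance (priority := 90) NormedField.completableTopField {F : Type*} [NormedField F] :
    CompletableTopField F := by
  refine { toT0Space := inferInstance, nice := fun G hG hGO => ?_ }
  obtain ⟨U, hU, V, hV, hUV⟩ := Filter.inf_eq_bot_iff.mp hGO
  obtain ⟨ε, hε, hball⟩ := Metric.mem_nhds_iff.mp hU
  have hVnorm : ∀ x ∈ V, ε ≤ ‖x‖ := by
    intro x hx
    by_contra hlt
    push_neg at hlt
    have hU' : x ∈ U := hball (by simpa [Metric.mem_ball, dist_zero_right] using hlt)
    have : x ∈ U ∩ V := ⟨hU', hx⟩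
    simp [hUV] at this
  rw [Metric.cauchy_iff]
  refine ⟨hG.1.map _, fun δ hδ => ?_⟩
  obtain ⟨t, htG, ht⟩ := (Metric.cauchy_iff.mp hG).2 (δ * ε ^ 2 / 2) (by positivity)
  refine ⟨(·⁻¹) '' (t ∩ V), Filter.image_mem_map (Filter.inter_mem htG hV), ?_⟩
  rintro _ ⟨x, ⟨hxt, hxV⟩, rfl⟩ _ ⟨y, ⟨hyt, hyV⟩, rfl⟩
  have hxε := hVnorm x hxV
  have hyε := hVnorm y hyV
  have hx0 : x ≠ 0 := fun h => by rw [h, norm_zero] at hxε; linarith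
  have hy0 : y ≠ 0 := fun h => by rw [h, norm_zero] at hyε; linarith
  rw [dist_eq_norm, inv_sub_inv hx0 hy0, norm_div, norm_mul]
  have h1 : ‖y - x‖ < δ * ε ^ 2 / 2 := by
    rw [← dist_eq_norm]; rw [dist_comm]; exact ht x hxt y hyt
  have h2 : ε ^ 2 ≤ ‖x‖ * ‖y‖ := by nlinarith
  rw [div_lt_iff₀ (by nlinarith)]
  nlinarith

section ExtHom

variable {K : Type u} [Field K] {L : Type u} [Field L] [Algebra K L]
  (v : AbsoluteValue K ℝ) (w : AbsoluteValue L ℝ) (h : ∀ x, w (algebraMap K L x) = v x)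

theorem algWithAbs_apply (x : WithAbs v) :
    algWithAbs v w x = WithAbs.toAbs w (algebraMap K L x.ofAbs) := rfl

include h in
theorem norm_algWithAbs (x : WithAbs v) : ‖algWithAbs v w x‖ = v x.ofAbs := h x.ofAbs

theorem extCompletionHom_coe (x : WithAbs v) :
    extCompletionHom v w h (x : v.Completion) =
      ((algWithAbs v w x : WithAbs w) : w.Completion) :=
  UniformSpace.Completion.mapRingHom_coe _ x

theorem continuous_extCompletionHom : Continuous (extCompletionHom v w h) :=
  UniformSpace.Completion.continuous_extension

theorem isometry_extCompletionHom : Isometry (extCompletionHom v w h) := by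
  refine Isometry.of_dist_eq fun x y => ?_
  refine UniformSpace.Completion.induction_on₂ x y ?_ fun a b => ?_
  · exact isClosed_eq
      (((continuous_extCompletionHom v w h).comp continuous_fst).dist
        ((continuous_extCompletionHom v w h).comp continuous_snd)) continuous_dist
  · rw [extCompletionHom_coe, extCompletionHom_coe, UniformSpace.Completion.dist_eq,
      UniformSpace.Completion.dist_eq]
    exact (AddMonoidHomClass.isometry_of_norm (algWithAbs v w) (norm_algWithAbs v w h)).dist_eq a b

theorem norm_extCompletionHom (x : v.Completion) : ‖extCompletionHom v w h x‖ = ‖x‖ :=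
  (isometry_extCompletionHom v w h).norm_map_of_map_zero (map_zero _) x

theorem extCompletionHom_comp {M : Type u} [Field M] [Algebra L M] [Algebra K M]
    [IsScalarTower K L M] (u : AbsoluteValue M ℝ)
    (h2 : ∀ x, u (algebraMap L M x) = w x) (h3 : ∀ x, u (algebraMap K M x) = v x) :
    extCompletionHom v u h3 = (extCompletionHom w u h2).comp (extCompletionHom v w h) := by
  refine RingHom.ext fun x => ?_
  refine UniformSpace.Completion.induction_on x ?_ fun a => ?_
  · exact isClosed_eq (continuous_extCompletionHom v u h3)
      ((continuous_extCompletionHom w u h2).comp (continuous_extCompletionHom v w h))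
  · rw [RingHom.comp_apply, extCompletionHom_coe, extCompletionHom_coe, extCompletionHom_coe]
    exact congrArg (fun z : M => ((WithAbs.toAbs u z : WithAbs u) : u.Completion))
      (IsScalarTower.algebraMap_apply K L M a.ofAbs)

end ExtHom

end Stage1
section Stage2

open UniformSpace

variable {K : Type u} [Field K]

/-- An absolute value is trivial if it is `1` on all nonzero elements. -/
def IsTrivialAbs (v : AbsoluteValue K ℝ) : Prop := ∀ x : K, x ≠ 0 → v x = 1

theorem IsTrivialAbs.le_one {v : AbsoluteValue K ℝ} (hv : IsTrivialAbs v) (x : K) : v x ≤ 1 := by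
  rcases eq_or_ne x 0 with rfl | hx
  · simp
  · exact (hv x hx).le

theorem IsTrivialAbs.eq_abs {v w : AbsoluteValue K ℝ} (hv : IsTrivialAbs v)
    (hw : IsTrivialAbs w) : v = w := by
  ext x
  rcases eq_or_ne x 0 with rfl | hx
  · simp
  · rw [hv x hx, hw x hx]

theorem abs_le_finrank_of_one_le {L : Type u} [Field L] [Algebra K L]
    [FiniteDimensional K L] {v : AbsoluteValue K ℝ} {w : AbsoluteValue L ℝ}
    (hw : ∀ x, w (algebraMap K L x) = v x) (hv : IsTrivialAbs v)
    (z : L) (hz : 1 ≤ w z) : w z ≤ (Module.finrank K L : ℝ) := by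
  set p := minpoly K z with hp
  have hint : IsIntegral K z := Algebra.IsIntegral.isIntegral z
  have hmonic : p.Monic := minpoly.monic hint
  set m := p.natDegree with hm
  have hm1 : 1 ≤ m := minpoly.natDegree_pos hint
  have hroot : Polynomial.aeval z p = 0 := minpoly.aeval K z
  have hsum : (0 : L) = ∑ i ∈ Finset.range (m + 1), algebraMap K L (p.coeff i) * z ^ i := by
    rw [← hroot, Polynomial.aeval_def, Polynomial.eval₂_eq_sum_range]
  rw [Finset.sum_range_succ, hmonic.coeff_natDegree, map_one, one_mul] at hsum
  have hzm : z ^ m = -∑ i ∈ Finset.range m, algebraMap K L (p.coeff i) * z ^ i :=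
    eq_neg_of_add_eq_zero_right hsum.symm
  have hbound : w z ^ m ≤ (m : ℝ) * w z ^ (m - 1) := by
    calc w z ^ m = w (z ^ m) := (map_pow w z m).symm
    _ = w (∑ i ∈ Finset.range m, algebraMap K L (p.coeff i) * z ^ i) := by rw [hzm, w.map_neg]
    _ ≤ ∑ i ∈ Finset.range m, w (algebraMap K L (p.coeff i) * z ^ i) := w.sum_le _ _
    _ ≤ ∑ i ∈ Finset.range m, w z ^ (m - 1) := by
        refine Finset.sum_le_sum fun i hi => ?_
        rw [map_mul, map_pow]
        have h1 : w (algebraMap K L (p.coeff i)) ≤ 1 := by rw [hw]; exact hv.le_one _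
        have h2 : w z ^ i ≤ w z ^ (m - 1) :=
          pow_le_pow_right₀ hz (Nat.le_sub_one_of_lt (Finset.mem_range.mp hi))
        have h3 : (0:ℝ) ≤ w z ^ i := pow_nonneg (w.nonneg z) i
        nlinarith
    _ = (m : ℝ) * w z ^ (m - 1) := by rw [Finset.sum_const, Finset.card_range, nsmul_eq_mul]
  have hwm : w z ≤ (m : ℝ) := by
    have hpow : (0:ℝ) < w z ^ (m - 1) := pow_pos (lt_of_lt_of_le one_pos hz) _
    have : w z * w z ^ (m - 1) ≤ (m : ℝ) * w z ^ (m - 1) := by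
      rw [← pow_succ']
      have : m - 1 + 1 = m := Nat.succ_pred_eq_of_pos hm1
      rw [this]
      exact hbound
    exact le_of_mul_le_mul_right this hpow
  exact hwm.trans (Nat.cast_le.mpr (minpoly.natDegree_le z))

theorem IsTrivialAbs.of_extension {L : Type u} [Field L] [Algebra K L]
    [FiniteDimensional K L] {v : AbsoluteValue K ℝ} {w : AbsoluteValue L ℝ}
    (hw : ∀ x, w (algebraMap K L x) = v x) (hv : IsTrivialAbs v) : IsTrivialAbs w := by
  have key : ∀ z : L, w z ≤ 1 := by
    intro z
    by_contra hgt
    push_neg at hgt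
    obtain ⟨k, hk⟩ := pow_unbounded_of_one_lt (Module.finrank K L : ℝ) hgt
    have h1 : 1 ≤ w (z ^ k) := by
      rw [map_pow]; exact one_le_pow₀ hgt.le
    have h2 := abs_le_finrank_of_one_le hw hv (z ^ k) h1
    rw [map_pow] at h2
    linarith
  intro y hy
  have h1 := key y
  have h2 := key y⁻¹
  have h3 : w y * w y⁻¹ = 1 := by rw [← map_mul, mul_inv_cancel₀ hy, map_one]
  nlinarith [w.pos hy]

theorem IsTrivialAbs.completeSpace {L : Type u} [Field L] {w : AbsoluteValue L ℝ}
    (hw : IsTrivialAbs w) : CompleteSpace (WithAbs w) := by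
  apply Metric.complete_of_cauchySeq_tendsto
  intro u hu
  obtain ⟨N, hN⟩ := Metric.cauchySeq_iff'.mp hu 1 one_pos
  refine ⟨u N, tendsto_atTop_of_eventually_const (i₀ := N) fun n hn => ?_⟩
  by_contra hne
  have hsub : u n - u N ≠ 0 := sub_ne_zero.mpr hne
  have : dist (u n) (u N) = 1 := by
    rw [dist_eq_norm, WithAbs.norm_eq_abs']
    exact hw _ (fun h => hsub ((WithAbs.ofAbs_eq_zero (v := w)).mp h))
  linarith [hN n hn]

/-- If `WithAbs w` is complete, the coercion into the completion is a ring isomorphism. -/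
def completionRingEquivOfComplete {L : Type u} [Field L] (w : AbsoluteValue L ℝ)
    (hc : CompleteSpace (WithAbs w)) : WithAbs w ≃+* w.Completion := by
  refine RingEquiv.ofBijective (UniformSpace.Completion.coeRingHom)
    ⟨UniformSpace.Completion.coe_injective _, ?_⟩
  have hclosed : IsClosed (Set.range ((↑) : WithAbs w → w.Completion)) :=
    (UniformSpace.Completion.isUniformEmbedding_coe (WithAbs w)).isClosedEmbedding.isClosed_range
  have hdense := UniformSpace.Completion.denseRange_coe (α := WithAbs w)
  intro x
  have : Set.range ((↑) : WithAbs w → w.Completion) = Set.univ := by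
    rw [← hclosed.closure_eq]
    exact hdense.closure_range
  exact Set.mem_range.mp (this ▸ Set.mem_univ x)

end Stage2
section Stage3

open UniformSpace

/-- The trivial absolute value on a field. -/
def trivialAbs (K : Type u) [Field K] : AbsoluteValue K ℝ where
  toFun x := if x = 0 then 0 else 1
  map_mul' x y := by by_cases hx : x = 0 <;> by_cases hy : y = 0 <;> simp [hx, hy]
  nonneg' x := by split_ifs <;> norm_num
  eq_zero' x := by split_ifs with h <;> simp [h]
  add_le' x y := by
    by_cases hx : x = 0 <;> by_cases hy : y = 0 <;> simp [hx, hy] <;> split_ifs <;> norm_num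

theorem isTrivialAbs_trivialAbs (K : Type u) [Field K] : IsTrivialAbs (trivialAbs K) :=
  fun _ hx => if_neg hx

variable {K : Type u} [Field K] {L : Type u} [Field L] [Algebra K L]

theorem localDegree_of_trivial [FiniteDimensional K L] (v : AbsoluteValue K ℝ)
    (w : AbsoluteValue L ℝ) (h : ∀ x, w (algebraMap K L x) = v x)
    (hv : IsTrivialAbs v) (hw : IsTrivialAbs w) :
    localDegree v w h = Module.finrank K L := by
  letI : Algebra v.Completion w.Completion := (extCompletionHom v w h).toAlgebra
  have hld : localDegree v w h = Module.finrank v.Completion w.Completion := rfl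
  set e1 : WithAbs v ≃+* v.Completion := completionRingEquivOfComplete v hv.completeSpace with he1
  set e2 : WithAbs w ≃+* w.Completion := completionRingEquivOfComplete w hw.completeSpace with he2
  have hcomm : (algebraMap K L).comp (e1.symm.trans (WithAbs.equiv v)).toRingHom =
      (e2.symm.trans (WithAbs.equiv w)).toRingHom.comp
        (algebraMap v.Completion w.Completion) := by
    refine RingHom.ext fun x => ?_
    obtain ⟨y, rfl⟩ := e1.surjective x
    simp only [RingEquiv.toRingHom_eq_coe, RingHom.coe_comp, RingHom.coe_coe,
      RingEquiv.coe_trans, Function.comp_apply]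
    rw [RingEquiv.symm_apply_apply]
    have hco : e1 y = (y : v.Completion) := rfl
    rw [hco, RingHom.algebraMap_toAlgebra, extCompletionHom_coe v w h y]
    rw [show ((algWithAbs v w y : WithAbs w) : w.Completion) = e2 (algWithAbs v w y) from rfl,
      RingEquiv.symm_apply_apply]
    rfl
  have hrank := Algebra.rank_eq_of_equiv_equiv
    (e1.symm.trans (WithAbs.equiv v)) (e2.symm.trans (WithAbs.equiv w)) hcomm
  rw [hld]
  simp only [Module.finrank]
  exact congrArg Cardinal.toNat hrank

theorem isWellBehaved_of_trivial (w : AbsoluteValue K ℝ) (hw : IsTrivialAbs w) :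
    IsWellBehaved K w := by
  intro M _ _ hfin
  haveI := hfin
  have hext : ∀ x : K, trivialAbs M (algebraMap K M x) = w x := by
    intro x
    rcases eq_or_ne x 0 with rfl | hx
    · simp [trivialAbs]
    · rw [isTrivialAbs_trivialAbs M _ ((map_ne_zero_iff _ (algebraMap K M).injective).mpr hx),
        hw x hx]
  letI : Unique {u : AbsoluteValue M ℝ // ∀ x, u (algebraMap K M x) = w x} :=
    ⟨⟨⟨trivialAbs M, hext⟩⟩, fun u => Subtype.ext
      ((IsTrivialAbs.of_extension u.2 hw).eq_abs (isTrivialAbs_trivialAbs M))⟩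
  rw [finsum_unique]
  exact (localDegree_of_trivial w (trivialAbs M) hext hw (isTrivialAbs_trivialAbs M)).symm

end Stage3
section Stage4

open UniformSpace

variable {K : Type u} [Field K] {L : Type u} [Field L] [Algebra K L]

theorem exists_one_lt_abs {v : AbsoluteValue K ℝ} (hv : ¬ IsTrivialAbs v) :
    ∃ x : K, 1 < v x := by
  have hex : ∃ x : K, x ≠ 0 ∧ v x ≠ 1 := by
    by_contra h
    push_neg at h
    exact hv fun x hx => h x hx
  obtain ⟨x, hx0, hx1⟩ := hex
  rcases lt_or_gt_of_ne hx1 with hlt | hgt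
  · refine ⟨x⁻¹, ?_⟩
    rw [map_inv₀]
    exact (one_lt_inv₀ (v.pos hx0)).mpr hlt
  · exact ⟨x, hgt⟩

/-- Nontrivially normed field structure on the completion at a nontrivial absolute value. -/
@[reducible] noncomputable def nontrivNormedField (v : AbsoluteValue K ℝ) (hv : ¬ IsTrivialAbs v) :
    NontriviallyNormedField v.Completion := by
  refine { (inferInstance : NormedField v.Completion) with non_trivial := ?_ }
  obtain ⟨x, hx⟩ := exists_one_lt_abs hv
  refine ⟨((WithAbs.toAbs v x : WithAbs v) : v.Completion), ?_⟩
  rw [UniformSpace.Completion.norm_coe, WithAbs.norm_eq_abs']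
  exact hx

theorem nontrivial_completion (v : AbsoluteValue K ℝ) : Nontrivial v.Completion :=
  (UniformSpace.Completion.coe_injective (WithAbs v)).nontrivial

/-- Normed space structure of a completion of an extension over the base completion. -/
@[reducible] noncomputable def normedSpaceCompletion (v : AbsoluteValue K ℝ) (w : AbsoluteValue L ℝ)
    (h : ∀ x, w (algebraMap K L x) = v x) :
    letI : Algebra v.Completion w.Completion := (extCompletionHom v w h).toAlgebra
    NormedSpace v.Completion w.Completion :=
  letI : Algebra v.Completion w.Completion := (extCompletionHom v w h).toAlgebra
  { norm_smul_le := fun a c => by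
      rw [Algebra.smul_def, RingHom.algebraMap_toAlgebra]
      calc ‖extCompletionHom v w h a * c‖ ≤ ‖extCompletionHom v w h a‖ * ‖c‖ := norm_mul_le _ _
      _ = ‖a‖ * ‖c‖ := by rw [norm_extCompletionHom] }

theorem coe_smul_completion (v : AbsoluteValue K ℝ) (w : AbsoluteValue L ℝ)
    (h : ∀ x, w (algebraMap K L x) = v x) (a : K) (x : L) :
    letI : Algebra v.Completion w.Completion := (extCompletionHom v w h).toAlgebra
    ((WithAbs.toAbs w (a • x) : WithAbs w) : w.Completion) =
        ((WithAbs.toAbs v a : WithAbs v) : v.Completion) • ((WithAbs.toAbs w x : WithAbs w) : w.Completion) := by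
  letI : Algebra v.Completion w.Completion := (extCompletionHom v w h).toAlgebra
  rw [Algebra.smul_def (A := w.Completion), RingHom.algebraMap_toAlgebra, extCompletionHom_coe]
  rw [show (a • x : L) = algebraMap K L a * x from Algebra.smul_def a x]
  exact UniformSpace.Completion.coe_mul _ _

/-- The completion of a finite extension is a finite module over the base completion. -/
theorem module_finite_completion [FiniteDimensional K L] (v : AbsoluteValue K ℝ)
    (hv : ¬ IsTrivialAbs v) (w : AbsoluteValue L ℝ) (h : ∀ x, w (algebraMap K L x) = v x) :
    letI : Algebra v.Completion w.Completion := (extCompletionHom v w h).toAlgebra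
    Module.Finite v.Completion w.Completion := by
  letI : Algebra v.Completion w.Completion := (extCompletionHom v w h).toAlgebra
  letI : NontriviallyNormedField v.Completion := nontrivNormedField v hv
  letI : NormedSpace v.Completion w.Completion := normedSpaceCompletion v w h
  obtain ⟨s, hs⟩ := (Module.finite_def.mp (inferInstance : Module.Finite K L))
  set f : L → w.Completion := fun y => ((WithAbs.toAbs w y : WithAbs w) : w.Completion) with hf
  set T : Submodule v.Completion w.Completion := Submodule.span v.Completion (f '' ↑s) with hT
  haveI : FiniteDimensional v.Completion T :=
    FiniteDimensional.span_of_finite _ ((s.finite_toSet).image f)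
  have hrange : ∀ z : L, f z ∈ T := by
    intro z
    have hz : z ∈ Submodule.span K (↑s : Set L) := hs ▸ Submodule.mem_top
    refine Submodule.span_induction (p := fun x _ => f x ∈ T) ?_ ?_ ?_ ?_ hz
    · intro x hx
      exact Submodule.subset_span ⟨x, hx, rfl⟩
    · have : f 0 = 0 := by
        simp only [hf]
        exact map_zero (UniformSpace.Completion.coeRingHom (α := WithAbs w))
      show f 0 ∈ T
      rw [this]; exact T.zero_mem
    · intro x y _ _ hx hy
      have : f (x + y) = f x + f y := UniformSpace.Completion.coe_add _ _
      show f (x + y) ∈ T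
      rw [this]; exact T.add_mem hx hy
    · intro a x _ hx
      have : f (a • x) = ((WithAbs.toAbs v a : WithAbs v) : v.Completion) • f x := coe_smul_completion v w h a x
      show f (a • x) ∈ T
      rw [this]; exact T.smul_mem _ hx
  haveI : IsBoundedSMul v.Completion w.Completion := NormedSpace.toIsBoundedSMul
  haveI : CompleteSpace v.Completion := UniformSpace.Completion.completeSpace _
  have hclosed : IsClosed (T : Set w.Completion) := T.closed_of_finiteDimensional
  have hdense : Dense (T : Set w.Completion) := by
    refine (UniformSpace.Completion.denseRange_coe (α := WithAbs w)).mono ?_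
    rintro _ ⟨y, rfl⟩
    exact hrange y.ofAbs
  have htop : T = ⊤ := by
    refine Submodule.eq_top_iff'.mpr fun x => ?_
    have : x ∈ closure (T : Set w.Completion) := by
      rw [hdense.closure_eq]; trivial
    rwa [hclosed.closure_eq] at this
  refine ⟨⟨s.image (fun y : L => ((WithAbs.toAbs w y : WithAbs w) : w.Completion)), ?_⟩⟩
  rw [Finset.coe_image]
  exact htop

theorem localDegree_pos [FiniteDimensional K L] (v : AbsoluteValue K ℝ)
    (hv : ¬ IsTrivialAbs v) (w : AbsoluteValue L ℝ) (h : ∀ x, w (algebraMap K L x) = v x) :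
    0 < localDegree v w h := by
  letI : Algebra v.Completion w.Completion := (extCompletionHom v w h).toAlgebra
  have hld : localDegree v w h = Module.finrank v.Completion w.Completion := rfl
  haveI := module_finite_completion v hv w h
  haveI := nontrivial_completion w
  rw [hld]
  exact Module.finrank_pos

end Stage4
section Stage5a

variable {F : Type u} [Field F]

theorem abs_le_one_of_ball_le {u u' : AbsoluteValue F ℝ}
    (hball : ∀ x, u x < 1 → u' x < 1) (hnt : ∃ z, 1 < u z) :
    ∀ x, u x ≤ 1 → u' x ≤ 1 := by
  intro x hx
  by_contra hgt
  push_neg at hgt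
  obtain ⟨z, hz⟩ := hnt
  have hz0 : z ≠ 0 := by
    intro h; rw [h, map_zero] at hz; linarith
  set y := z⁻¹ with hy
  have hy0 : y ≠ 0 := inv_ne_zero hz0
  have huy : u y < 1 := by
    rw [hy, map_inv₀]
    exact inv_lt_one_of_one_lt₀ hz
  have hu'y : 0 < u' y := u'.pos hy0
  obtain ⟨n, hn⟩ := pow_unbounded_of_one_lt ((u' y)⁻¹) hgt
  have h1 : u (x ^ n * y) < 1 := by
    rw [map_mul, map_pow]
    calc u x ^ n * u y ≤ 1 * u y := by
          have := pow_le_one₀ (u.nonneg x) hx (n := n)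
          nlinarith [u.nonneg y]
    _ = u y := one_mul _
    _ < 1 := huy
  have h2 := hball _ h1
  rw [map_mul, map_pow] at h2
  have : (u' y)⁻¹ < u' x ^ n := hn
  have h3 : 1 < u' x ^ n * u' y := by
    rw [← inv_mul_cancel₀ (ne_of_gt hu'y)]
    exact mul_lt_mul_of_pos_right hn hu'y
  linarith

theorem ball_eq_of_ball_le {u u' : AbsoluteValue F ℝ}
    (hball : ∀ x, u x < 1 → u' x < 1) (hnt : ∃ z, 1 < u z) :
    ∀ x, u x < 1 ↔ u' x < 1 := by
  intro x
  refine ⟨hball x, fun hx => ?_⟩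
  by_contra hge
  push_neg at hge
  have hx0 : x ≠ 0 := by
    intro h; rw [h, map_zero] at hge; linarith
  have h1 : u x⁻¹ ≤ 1 := by
    rw [map_inv₀]
    exact inv_le_one_of_one_le₀ hge
  have h2 := abs_le_one_of_ball_le hball hnt x⁻¹ h1
  rw [map_inv₀] at h2
  have hp := u'.pos hx0
  have hinv : (u' x)⁻¹ * u' x = 1 := inv_mul_cancel₀ (ne_of_gt hp)
  nlinarith

/-- Two absolute values on `L` extending the same nontrivial absolute value on `K`, whose
open unit balls are comparable, are equal. -/
theorem eq_of_ball_le_of_extension {K : Type u} [Field K] [Algebra K F]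
    {w : AbsoluteValue K ℝ} {u u' : AbsoluteValue F ℝ}
    (hu : ∀ x, u (algebraMap K F x) = w x) (hu' : ∀ x, u' (algebraMap K F x) = w x)
    (hw : ¬ IsTrivialAbs w) (hball : ∀ x, u x < 1 → u' x < 1) : u = u' := by
  obtain ⟨x0, hx0⟩ := exists_one_lt_abs hw
  set c := algebraMap K F x0 with hc
  have hc0 : c ≠ 0 := by
    rw [hc]
    exact (map_ne_zero_iff _ (algebraMap K F).injective).mpr
      (fun h => by rw [h, map_zero] at hx0; linarith)
  set a := w x0 with ha
  have ha1 : 1 < a := hx0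
  have ha0 : 0 < a := lt_trans one_pos ha1
  have hloga : 0 < Real.log a := Real.log_pos ha1
  have huc : u c = a := hu x0
  have hu'c : u' c = a := hu' x0
  have hnt : ∃ z, 1 < u z := ⟨c, by rw [huc]; exact ha1⟩
  have hballs := ball_eq_of_ball_le hball hnt
  -- key: for y ≠ 0 and any 𝑚 𝑛, u (y^n / c^m) < 1 ↔ n log (u y) < m log a
  have key : ∀ (uu : AbsoluteValue F ℝ), uu c = a → ∀ (y : F), y ≠ 0 → ∀ (m : ℤ) (n : ℕ),
      0 < n → (uu (y ^ n / c ^ m) < 1 ↔ (n : ℝ) * Real.log (uu y) < (m : ℝ) * Real.log a) := by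
    intro uu huuc y hy m n hn
    have hy0 : 0 < uu y := uu.pos hy
    have hcm : (0:ℝ) < a ^ m := zpow_pos ha0 m
    rw [map_div₀, map_pow, map_zpow₀, huuc]
    rw [div_lt_one (zpow_pos ha0 m)]
    rw [← Real.log_lt_log_iff (pow_pos hy0 n) (zpow_pos ha0 m), Real.log_pow, Real.log_zpow]
  have main : ∀ y : F, y ≠ 0 → u y = u' y := by
    intro y hy
    by_contra hne
    -- wlog u y < u' y via cases
    have hcase : ∀ (uu uu' : AbsoluteValue F ℝ), uu c = a → uu' c = a →
        (∀ x, uu x < 1 ↔ uu' x < 1) → uu y < uu' y → False := by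
      intro uu uu' huuc huu'c hbe hlt
      have h0 : 0 < uu y := uu.pos hy
      have h0' : 0 < uu' y := uu'.pos hy
      obtain ⟨q, hq1, hq2⟩ := exists_rat_btwn
        (div_lt_div_of_pos_right (Real.log_lt_log h0 hlt) hloga)
      set m := q.num with hm
      set n := q.den with hn
      have hnpos : 0 < n := q.pos
      have hnR : (0:ℝ) < (n : ℝ) := by exact_mod_cast hnpos
      have hqcast : (q : ℝ) = (m : ℝ) / (n : ℝ) := by rw [hm, hn, Rat.cast_def]
      have h1 : (n:ℝ) * Real.log (uu y) < (m:ℝ) * Real.log a := by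
        rw [hqcast, div_lt_div_iff₀ hloga hnR] at hq1
        linarith [mul_comm (Real.log (uu y)) ((n:ℝ))]
      have h2 : (m:ℝ) * Real.log a < (n:ℝ) * Real.log (uu' y) := by
        rw [hqcast, div_lt_div_iff₀ hnR hloga] at hq2
        linarith [mul_comm (Real.log (uu' y)) ((n:ℝ))]
      have h3 := (key uu huuc y hy m n hnpos).mpr h1
      have h4 := (hbe _).mp h3
      have h5 := (key uu' huu'c y hy m n hnpos).mp h4
      linarith
    rcases lt_or_gt_of_ne hne with hlt | hgt
    · exact hcase u u' huc hu'c hballs hlt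
    · exact hcase u' u hu'c huc (fun x => (hballs x).symm) hgt
  ext y
  rcases eq_or_ne y 0 with rfl | hy
  · simp
  · exact main y hy
end Stage5a
section Stage5b

open Filter Topology

variable {F : Type u} [Field F]

theorem abs_one_add_ge_sub (u : AbsoluteValue F ℝ) (a : F) : u a - 1 ≤ u (1 + a) := by
  have h : u a ≤ u (1 + a) + 1 := by
    calc u a = u ((1 + a) + (-1)) := by rw [show (1 + a) + (-1) = a by ring]
    _ ≤ u (1 + a) + u (-1) := u.add_le _ _
    _ = u (1 + a) + 1 := by rw [u.map_neg, u.map_one]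
  linarith

theorem abs_one_add_ge_one_sub (u : AbsoluteValue F ℝ) (a : F) : 1 - u a ≤ u (1 + a) := by
  have h : (1:ℝ) ≤ u (1 + a) + u a := by
    calc (1:ℝ) = u 1 := u.map_one.symm
    _ = u ((1 + a) + (-a)) := by rw [show (1 + a) + (-a) = 1 by ring]
    _ ≤ u (1 + a) + u (-a) := u.add_le _ _
    _ = u (1 + a) + u a := by rw [u.map_neg]
  linarith

theorem abs_le_add_abs_sub (u : AbsoluteValue F ℝ) (x y : F) : u x ≤ u y + u (x - y) := by
  calc u x = u (y + (x - y)) := by rw [show y + (x - y) = x by ring]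
  _ ≤ u y + u (x - y) := u.add_le _ _

theorem tendsto_ratio_sub_one (u : AbsoluteValue F ℝ) {z : F} (hz : 1 < u z) :
    Tendsto (fun n : ℕ => u (z ^ n / (1 + z ^ n) - 1)) atTop (𝓝 0) := by
  have hpow : Tendsto (fun n : ℕ => u z ^ n) atTop atTop := tendsto_pow_atTop_atTop_of_one_lt hz
  have hden : Tendsto (fun n : ℕ => u z ^ n - 1) atTop atTop := by
    simpa [sub_eq_add_neg] using tendsto_atTop_add_const_right atTop (-1) hpow
  have hinv : Tendsto (fun n : ℕ => (u z ^ n - 1)⁻¹) atTop (𝓝 0) := hden.inv_tendsto_atTop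
  refine squeeze_zero' (Eventually.of_forall fun n => u.nonneg _) ?_ hinv
  have hev : ∀ᶠ n : ℕ in atTop, 1 < u z ^ n := hpow.eventually_gt_atTop 1
  filter_upwards [hev] with n hn
  have hlow : u z ^ n - 1 ≤ u (1 + z ^ n) := by
    have := abs_one_add_ge_sub u (z ^ n); rw [map_pow] at this; linarith
  have hEpos : 0 < u (1 + z ^ n) := by linarith
  have hE0 : (1 + z ^ n) ≠ 0 := fun h => by rw [h, map_zero] at hEpos; linarith
  have heq : z ^ n / (1 + z ^ n) - 1 = -(1 / (1 + z ^ n)) := by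
    field_simp
    ring
  rw [heq, u.map_neg, map_div₀, u.map_one, one_div]
  exact inv_anti₀ (by linarith) hlow

theorem tendsto_ratio (u : AbsoluteValue F ℝ) {z : F} (hz : u z < 1) :
    Tendsto (fun n : ℕ => u (z ^ n / (1 + z ^ n))) atTop (𝓝 0) := by
  have hpow : Tendsto (fun n : ℕ => u z ^ n) atTop (𝓝 0) :=
    tendsto_pow_atTop_nhds_zero_of_lt_one (u.nonneg z) hz
  have h2 : Tendsto (fun n : ℕ => 2 * u z ^ n) atTop (𝓝 0) := by
    simpa using hpow.const_mul (2:ℝ)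
  refine squeeze_zero' (Eventually.of_forall fun n => u.nonneg _) ?_ h2
  have hev : ∀ᶠ n : ℕ in atTop, u z ^ n < 1/2 := hpow.eventually_lt_const (by norm_num)
  filter_upwards [hev] with n hn
  have h1 : 1 - u z ^ n ≤ u (1 + z ^ n) := by
    have := abs_one_add_ge_one_sub u (z ^ n); rw [map_pow] at this; linarith
  have hEpos : 0 < u (1 + z ^ n) := by linarith
  have hE0 : (1 + z ^ n) ≠ 0 := fun h => by rw [h, map_zero] at hEpos; linarith
  rw [map_div₀, map_pow, div_le_iff₀ hEpos]
  nlinarith [pow_nonneg (u.nonneg z) n]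

end Stage5b
section Stage5c

open Filter Topology

variable {F : Type u} [Field F]

theorem exists_separating {ι : Type u} [Fintype ι] [DecidableEq ι] (u : ι → AbsoluteValue F ℝ)
    (hnt : ∀ i, ∃ z, 1 < u i z)
    (hpair : ∀ i j, i ≠ j → ∃ c, 1 < u i c ∧ u j c < 1) (i : ι) :
    ∃ z, 1 < u i z ∧ ∀ j, j ≠ i → u j z < 1 := by
  suffices h : ∀ T : Finset ι, i ∉ T → ∃ z, 1 < u i z ∧ ∀ j ∈ T, u j z < 1 by
    obtain ⟨z, hz1, hz2⟩ := h (Finset.univ.erase i) (Finset.notMem_erase i _)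
    exact ⟨z, hz1, fun j hj => hz2 j (Finset.mem_erase.mpr ⟨hj, Finset.mem_univ j⟩)⟩
  intro T
  induction T using Finset.induction_on with
  | empty =>
    intro _
    obtain ⟨z, hz⟩ := hnt i
    exact ⟨z, hz, by simp⟩
  | @insert k T hk ih =>
    intro hiT
    have hik : i ≠ k := fun h => hiT (h ▸ Finset.mem_insert_self k T)
    have hiT' : i ∉ T := fun h => hiT (Finset.mem_insert_of_mem h)
    obtain ⟨z, hz1, hz2⟩ := ih hiT'
    obtain ⟨c, hc1, hc2⟩ := hpair i k hik
    have hci : 0 < u i c := lt_trans one_pos hc1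
    rcases lt_trichotomy (u k z) 1 with hlt | heq | hgt
    · refine ⟨z, hz1, fun j hj => ?_⟩
      rcases Finset.mem_insert.mp hj with rfl | hjT
      · exact hlt
      · exact hz2 j hjT
    · -- u k z = 1 : use z ^ n * c for large n
      have hev : ∀ᶠ n : ℕ in atTop, ∀ j ∈ T, u j (z ^ n * c) < 1 := by
        rw [eventually_all_finset]
        intro j hj
        have htend : Tendsto (fun n : ℕ => u j (z ^ n * c)) atTop (𝓝 0) := by
          have hfn : (fun n : ℕ => u j (z ^ n * c)) = fun n => u j z ^ n * u j c := by
            funext n; rw [map_mul, map_pow]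
          rw [hfn]
          simpa using
            (tendsto_pow_atTop_nhds_zero_of_lt_one ((u j).nonneg z) (hz2 j hj)).mul_const (u j c)
        exact htend.eventually_lt_const one_pos
      obtain ⟨n, hn⟩ := hev.exists
      refine ⟨z ^ n * c, ?_, fun j hj => ?_⟩
      · rw [map_mul, map_pow]
        have h1 : (1:ℝ) ≤ u i z ^ n := one_le_pow₀ hz1.le
        nlinarith
      · rcases Finset.mem_insert.mp hj with rfl | hjT
        · rw [map_mul, map_pow, heq, one_pow, one_mul]; exact hc2
        · exact hn j hjT
    · -- u k z > 1 : use (z ^ n / (1 + z ^ n)) * c for large n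
      set t : ℕ → F := fun n => z ^ n / (1 + z ^ n) with ht
      have hi' : Tendsto (fun n => u i (t n * c - c)) atTop (𝓝 0) := by
        have hfn : (fun n => u i (t n * c - c)) = fun n => u i (t n - 1) * u i c := by
          funext n; rw [← map_mul]; congr 1; ring
        rw [hfn]
        simpa only [zero_mul] using (tendsto_ratio_sub_one (u i) hz1).mul_const (u i c)
      have hk' : Tendsto (fun n => u k (t n * c - c)) atTop (𝓝 0) := by
        have hfn : (fun n => u k (t n * c - c)) = fun n => u k (t n - 1) * u k c := by
          funext n; rw [← map_mul]; congr 1; ring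
        rw [hfn]
        simpa only [zero_mul] using (tendsto_ratio_sub_one (u k) hgt).mul_const (u k c)
      have e1 : ∀ᶠ n in atTop, u i (t n * c - c) < u i c - 1 :=
        hi'.eventually_lt_const (by linarith)
      have e2 : ∀ᶠ n in atTop, u k (t n * c - c) < 1 - u k c :=
        hk'.eventually_lt_const (by linarith)
      have e3 : ∀ᶠ n in atTop, ∀ j ∈ T, u j (t n * c) < 1 := by
        rw [eventually_all_finset]
        intro j hj
        have htend : Tendsto (fun n => u j (t n * c)) atTop (𝓝 0) := by
          have hfn : (fun n => u j (t n * c)) = fun n => u j (t n) * u j c := by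
            funext n; rw [map_mul]
          rw [hfn]
          simpa only [zero_mul] using (tendsto_ratio (u j) (hz2 j hj)).mul_const (u j c)
        exact htend.eventually_lt_const one_pos
      obtain ⟨n, h1, h2, h3⟩ := (e1.and (e2.and e3)).exists
      refine ⟨t n * c, ?_, fun j hj => ?_⟩
      · have hle := abs_le_add_abs_sub (u i) c (t n * c)
        have : u i (c - t n * c) = u i (t n * c - c) := by
          rw [show c - t n * c = -(t n * c - c) by ring, (u i).map_neg]
        rw [this] at hle
        linarith
      · rcases Finset.mem_insert.mp hj with rfl | hjT
        · have hle := abs_le_add_abs_sub (u j) (t n * c) c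
          linarith
        · exact h3 j hjT

theorem weak_approximation {ι : Type u} [Fintype ι] [DecidableEq ι]
    (u : ι → AbsoluteValue F ℝ)
    (hnt : ∀ i, ∃ z, 1 < u i z)
    (hpair : ∀ i j, i ≠ j → ∃ c, 1 < u i c ∧ u j c < 1)
    (x : ι → F) {ε : ℝ} (hε : 0 < ε) :
    ∃ y : F, ∀ i, u i (y - x i) < ε := by
  choose z hz1 hz2 using fun i => exists_separating u hnt hpair i
  set t : ℕ → ι → F := fun n j => (z j) ^ n / (1 + (z j) ^ n) with ht
  set y : ℕ → F := fun n => ∑ j, t n j * x j with hy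
  have key : ∀ i, Tendsto (fun n => u i (y n - x i)) atTop (𝓝 0) := by
    intro i
    have hbound : ∀ n, u i (y n - x i) ≤
        u i (t n i - 1) * u i (x i) + ∑ j ∈ Finset.univ.erase i, u i (t n j) * u i (x j) := by
      intro n
      have hdecomp : y n - x i = (t n i - 1) * x i + ∑ j ∈ Finset.univ.erase i, t n j * x j := by
        rw [hy]
        simp only []
        rw [← Finset.add_sum_erase _ (fun j => t n j * x j) (Finset.mem_univ i)]
        ring
      rw [hdecomp]
      calc u i ((t n i - 1) * x i + ∑ j ∈ Finset.univ.erase i, t n j * x j)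
          ≤ u i ((t n i - 1) * x i) + u i (∑ j ∈ Finset.univ.erase i, t n j * x j) :=
            (u i).add_le _ _
      _ ≤ u i (t n i - 1) * u i (x i) + ∑ j ∈ Finset.univ.erase i, u i (t n j * x j) := by
            rw [map_mul]
            exact add_le_add le_rfl ((u i).sum_le _ _)
      _ = u i (t n i - 1) * u i (x i) + ∑ j ∈ Finset.univ.erase i, u i (t n j) * u i (x j) := by
            congr 1
            exact Finset.sum_congr rfl fun j _ => map_mul _ _ _
    have hrhs : Tendsto (fun n => u i (t n i - 1) * u i (x i) +
        ∑ j ∈ Finset.univ.erase i, u i (t n j) * u i (x j)) atTop (𝓝 0) := by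
      have hterm1 : Tendsto (fun n => u i (t n i - 1) * u i (x i)) atTop (𝓝 0) := by
        simpa only [zero_mul] using (tendsto_ratio_sub_one (u i) (hz1 i)).mul_const (u i (x i))
      have hterm2 : Tendsto (fun n => ∑ j ∈ Finset.univ.erase i, u i (t n j) * u i (x j))
          atTop (𝓝 0) := by
        have : Tendsto (fun n => ∑ j ∈ Finset.univ.erase i, u i (t n j) * u i (x j))
            atTop (𝓝 (∑ j ∈ Finset.univ.erase i, 0)) := by
          refine tendsto_finset_sum _ fun j hj => ?_
          have hij : i ≠ j := fun h => (Finset.mem_erase.mp hj).1 h.symm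
          simpa only [zero_mul] using (tendsto_ratio (u i) (hz2 j i hij)).mul_const (u i (x j))
        simpa using this
      simpa using hterm1.add hterm2
    refine squeeze_zero' (Eventually.of_forall fun n => (u i).nonneg _)
      (Eventually.of_forall hbound) hrhs
  have hev : ∀ᶠ n in atTop, ∀ i, u i (y n - x i) < ε := by
    rw [eventually_all]
    intro i
    exact (key i).eventually_lt_const hε
  obtain ⟨n, hn⟩ := hev.exists
  exact ⟨y n, hn⟩

end Stage5c
section Stage6

set_option maxHeartbeats 1000000 in
set_option synthInstance.maxHeartbeats 400000 in
theorem _stage6_dummy : True := trivial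

open UniformSpace Filter Topology

variable {L : Type u} [Field L] {M : Type u} [Field M] [Algebra L M] [FiniteDimensional L M]

set_option maxHeartbeats 2000000 in
set_option synthInstance.maxHeartbeats 1000000 in
theorem sum_localDegree_le (w : AbsoluteValue L ℝ) (hw : ¬ IsTrivialAbs w)
    (hfin : Finite {u : AbsoluteValue M ℝ // ∀ x, u (algebraMap L M x) = w x}) :
    ∑ᶠ u : {u : AbsoluteValue M ℝ // ∀ x, u (algebraMap L M x) = w x},
      localDegree w u.1 u.2 ≤ Module.finrank L M := by
  classical
  haveI := hfin
  set S := {u : AbsoluteValue M ℝ // ∀ x, u (algebraMap L M x) = w x} with hS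
  haveI : Fintype S := Fintype.ofFinite S
  rw [finsum_eq_sum_of_fintype]
  -- instances
  letI : NontriviallyNormedField w.Completion := nontrivNormedField w hw
  letI instCalg : ∀ u : S, Algebra w.Completion (u.1.Completion) :=
    fun u => (extCompletionHom w u.1 u.2).toAlgebra
  letI instCns : ∀ u : S, NormedSpace w.Completion (u.1.Completion) :=
    fun u => normedSpaceCompletion w u.1 u.2
  haveI instCfin : ∀ u : S, Module.Finite w.Completion (u.1.Completion) :=
    fun u => module_finite_completion w hw u.1 u.2
  letI instCmod : ∀ u : S, Module w.Completion (u.1.Completion) :=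
    fun u => (instCalg u).toModule
  letI instPiMod : Module w.Completion (∀ u : S, u.1.Completion) :=
    Pi.module S _ _
  letI instPiNS : NormedSpace w.Completion (∀ u : S, u.1.Completion) := Pi.normedSpace
  haveI : IsBoundedSMul w.Completion (∀ u : S, u.1.Completion) := NormedSpace.toIsBoundedSMul
  haveI : ContinuousSMul w.Completion (∀ u : S, u.1.Completion) := IsBoundedSMul.continuousSMul
  haveI : CompleteSpace w.Completion := UniformSpace.Completion.completeSpace _
  -- nontriviality and separation data
  obtain ⟨x0, hx0⟩ := exists_one_lt_abs hw
  have hnt : ∀ u : S, ∃ z, 1 < u.1 z := fun u => ⟨algebraMap L M x0, by rw [u.2]; exact hx0⟩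
  have hpair : ∀ i j : S, i ≠ j → ∃ c, 1 < i.1 c ∧ j.1 c < 1 := by
    intro i j hij
    have hne : i.1 ≠ j.1 := fun h => hij (Subtype.ext h)
    have hball1 : ¬ ∀ x, i.1 x < 1 → j.1 x < 1 :=
      fun hb => hne (eq_of_ball_le_of_extension i.2 j.2 hw hb)
    have hball2 : ¬ ∀ x, j.1 x < 1 → i.1 x < 1 :=
      fun hb => hne (eq_of_ball_le_of_extension j.2 i.2 hw hb).symm
    push_neg at hball1 hball2
    obtain ⟨a, ha1, ha2⟩ := hball1
    obtain ⟨b, hb1, hb2⟩ := hball2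
    have ha0 : a ≠ 0 := fun h => by rw [h, map_zero] at ha2; linarith
    have hb0 : b ≠ 0 := fun h => by rw [h, map_zero] at hb2; linarith
    have hia : 0 < i.1 a := i.1.pos ha0
    have hja : 0 < j.1 a := j.1.pos ha0
    refine ⟨b / a, ?_, ?_⟩
    · rw [map_div₀]
      rw [lt_div_iff₀ hia]
      nlinarith
    · rw [map_div₀, div_lt_one hja]
      linarith
  -- the diagonal embedding
  set diag : M → (∀ u : S, u.1.Completion) :=
    (fun m u => ((WithAbs.toAbs u.1 m : WithAbs u.1) : u.1.Completion)) with hdiag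
  have hdiag_add : ∀ m m', diag (m + m') = diag m + diag m' := fun m m' =>
    funext fun u => UniformSpace.Completion.coe_add _ _
  have hdiag_smul : ∀ (a : L) (m : M),
      diag (a • m) = ((WithAbs.toAbs w a : WithAbs w) : w.Completion) • diag m := fun a m =>
    funext fun u => by
      rw [Pi.smul_apply]
      exact coe_smul_completion w u.1 u.2 a m
  -- the spanning set
  set n := Module.finrank L M with hn
  set b := Module.finBasis L M with hb
  set D : Submodule w.Completion (∀ u : S, u.1.Completion) :=
    Submodule.span w.Completion (Set.range fun j : Fin n => diag (b j)) with hD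
  haveI : FiniteDimensional w.Completion D :=
    FiniteDimensional.span_of_finite _ (Set.finite_range _)
  have hrange : ∀ m : M, diag m ∈ D := by
    intro m
    have hm : m ∈ Submodule.span L (Set.range ⇑b) := by
      rw [b.span_eq]; trivial
    refine Submodule.span_induction (p := fun x _ => diag x ∈ D) ?_ ?_ ?_ ?_ hm
    · rintro x ⟨j, rfl⟩
      exact Submodule.subset_span ⟨j, rfl⟩
    · have : diag 0 = 0 := funext fun u =>
        map_zero (UniformSpace.Completion.coeRingHom (α := WithAbs u.1))
      show diag 0 ∈ D
      rw [this]; exact D.zero_mem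
    · intro x y _ _ hx hy
      show diag (x + y) ∈ D
      rw [hdiag_add]; exact D.add_mem hx hy
    · intro a x _ hx
      show diag (a • x) ∈ D
      rw [hdiag_smul]; exact D.smul_mem _ hx
  have hclosed : IsClosed (D : Set (∀ u : S, u.1.Completion)) := D.closed_of_finiteDimensional
  have hdense : Dense (D : Set (∀ u : S, u.1.Completion)) := by
    rw [Metric.dense_iff]
    intro p ε hε
    have hap : ∀ u : S, ∃ m : M, dist ((WithAbs.toAbs u.1 m : WithAbs u.1) : u.1.Completion) (p u) < ε/2 := by
      intro u
      obtain ⟨m, hm⟩ := Metric.denseRange_iff.mp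
        (UniformSpace.Completion.denseRange_coe (α := WithAbs u.1)) (p u) (ε/2) (by linarith)
      exact ⟨m.ofAbs, by rw [dist_comm]; exact hm⟩
    choose m hm using hap
    obtain ⟨y, hy⟩ := weak_approximation (ι := S) (fun u => u.1) hnt hpair m
      (ε := ε/2) (by linarith)
    refine ⟨diag y, Metric.mem_ball.mpr ?_, hrange y⟩
    rw [dist_pi_lt_iff hε]
    intro u
    have h1 : dist (diag y u) ((WithAbs.toAbs u.1 (m u) : WithAbs u.1) : u.1.Completion) < ε/2 := by
      rw [show diag y u = ((WithAbs.toAbs u.1 y : WithAbs u.1) : u.1.Completion) from rfl,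
        UniformSpace.Completion.dist_eq, dist_eq_norm, WithAbs.norm_eq_abs']
      exact hy u
    calc dist (diag y u) (p u) ≤
        dist (diag y u) ((WithAbs.toAbs u.1 (m u) : WithAbs u.1) : u.1.Completion) +
          dist ((WithAbs.toAbs u.1 (m u) : WithAbs u.1) : u.1.Completion) (p u) := dist_triangle _ _ _
    _ < ε/2 + ε/2 := add_lt_add h1 (hm u)
    _ = ε := by ring
  have hDtop : D = ⊤ := by
    refine Submodule.eq_top_iff'.mpr fun x => ?_
    have : x ∈ closure (D : Set (∀ u : S, u.1.Completion)) := by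
      rw [hdense.closure_eq]; trivial
    rwa [hclosed.closure_eq] at this
  -- finrank computations
  have hsum : ∑ u : S, localDegree w u.1 u.2 =
      Module.finrank w.Completion (∀ u : S, u.1.Completion) := by
    haveI tE : ∀ i : S, Module.Finite w.Completion i.1.Completion := instCfin
    rw [Module.finrank_pi_fintype]
    exact Finset.sum_congr rfl fun u _ => rfl
  rw [hsum]
  have h1 : Module.finrank w.Completion (∀ u : S, u.1.Completion) =
      Module.finrank w.Completion D := by
    rw [hDtop]
    exact (finrank_top _ _).symm
  rw [h1]
  have h2 := finrank_span_le_card (R := w.Completion)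
    (Set.range fun j : Fin n => diag (b j))
  refine h2.trans ?_
  rw [Set.toFinset_range]
  exact (Finset.card_image_le).trans (by simp [hn])

end Stage6
section Stage7

open UniformSpace

theorem localDegree_tower {K L M : Type u} [Field K] [Field L] [Field M]
    [Algebra K L] [Algebra L M] [Algebra K M] [IsScalarTower K L M]
    (v : AbsoluteValue K ℝ) (w : AbsoluteValue L ℝ) (u : AbsoluteValue M ℝ)
    (h1 : ∀ x, w (algebraMap K L x) = v x) (h2 : ∀ x, u (algebraMap L M x) = w x)
    (h3 : ∀ x, u (algebraMap K M x) = v x) :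
    localDegree v u h3 = localDegree v w h1 * localDegree w u h2 := by
  letI a1 : Algebra v.Completion w.Completion := (extCompletionHom v w h1).toAlgebra
  letI a2 : Algebra w.Completion u.Completion := (extCompletionHom w u h2).toAlgebra
  letI a3 : Algebra v.Completion u.Completion := (extCompletionHom v u h3).toAlgebra
  haveI : IsScalarTower v.Completion w.Completion u.Completion := by
    refine IsScalarTower.of_algebraMap_eq' ?_
    rw [RingHom.algebraMap_toAlgebra, RingHom.algebraMap_toAlgebra, RingHom.algebraMap_toAlgebra]
    exact extCompletionHom_comp v w h1 u h2 h3
  have e1 : localDegree v u h3 = Module.finrank v.Completion u.Completion := rfl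
  have e2 : localDegree v w h1 = Module.finrank v.Completion w.Completion := rfl
  have e3 : localDegree w u h2 = Module.finrank w.Completion u.Completion := rfl
  rw [e1, e2, e3]
  exact (Module.finrank_mul_finrank v.Completion w.Completion u.Completion).symm

theorem stmt_2' {K : Type u} [Field K] {L : Type u} [Field L] [Algebra K L]
    [FiniteDimensional K L] (v : AbsoluteValue K ℝ) (hv : IsWellBehaved K v)
    (w : AbsoluteValue L ℝ) (hw : ∀ x, w (algebraMap K L x) = v x) :
    IsWellBehaved L w := by
  classical
  by_cases hwt : IsTrivialAbs w
  · exact isWellBehaved_of_trivial w hwt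
  have hvt : ¬ IsTrivialAbs v := fun hvtr => hwt (IsTrivialAbs.of_extension hw hvtr)
  intro M _ _ hfinLM
  haveI := hfinLM
  letI : Algebra K M := ((algebraMap L M).comp (algebraMap K L)).toAlgebra
  haveI : IsScalarTower K L M := IsScalarTower.of_algebraMap_eq' rfl
  haveI : FiniteDimensional K M := Module.Finite.trans L M
  set SV := {s : AbsoluteValue L ℝ // ∀ x, s (algebraMap K L x) = v x} with hSV
  set SU := {s : AbsoluteValue M ℝ // ∀ x, s (algebraMap K M x) = v x} with hSU
  have hL : Module.finrank K L = ∑ᶠ s : SV, localDegree v s.1 s.2 := hv L inferInstance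
  have hM : Module.finrank K M = ∑ᶠ s : SU, localDegree v s.1 s.2 := hv M inferInstance
  have hposV : ∀ s : SV, 0 < localDegree v s.1 s.2 := fun s => localDegree_pos v hvt s.1 s.2
  have hposU : ∀ s : SU, 0 < localDegree v s.1 s.2 := fun s => localDegree_pos v hvt s.1 s.2
  haveI hfinSV : Finite SV := by
    rw [← not_infinite_iff_finite]
    intro hinf
    have hzero : ∑ᶠ s : SV, localDegree v s.1 s.2 = 0 := by
      apply finsum_of_infinite_support
      have hsupp : Function.support (fun s : SV => localDegree v s.1 s.2) = Set.univ := by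
        ext s; simp [Function.mem_support, (hposV s).ne']
      rw [hsupp]
      exact Set.infinite_univ
    rw [hzero] at hL
    have := Module.finrank_pos (R := K) (M := L)
    omega
  haveI hfinSU : Finite SU := by
    rw [← not_infinite_iff_finite]
    intro hinf
    have hzero : ∑ᶠ s : SU, localDegree v s.1 s.2 = 0 := by
      apply finsum_of_infinite_support
      have hsupp : Function.support (fun s : SU => localDegree v s.1 s.2) = Set.univ := by
        ext s; simp [Function.mem_support, (hposU s).ne']
      rw [hsupp]
      exact Set.infinite_univ
    rw [hzero] at hM
    have := Module.finrank_pos (R := K) (M := M)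
    omega
  haveI : Fintype SV := Fintype.ofFinite _
  haveI : Fintype SU := Fintype.ofFinite _
  -- each extension of v to L is nontrivial
  have hntV : ∀ r : SV, ¬ IsTrivialAbs r.1 := by
    intro r htriv
    refine hvt fun x hx => ?_
    rw [← r.2 x]
    exact htriv _ ((map_ne_zero_iff _ (algebraMap K L).injective).mpr hx)
  -- the fibers
  have hfinT : ∀ r : SV,
      Finite {t : AbsoluteValue M ℝ // ∀ x, t (algebraMap L M x) = r.1 x} := by
    intro r
    refine Finite.of_injective (fun t => (⟨t.1, fun x => by
      rw [IsScalarTower.algebraMap_apply K L M, t.2, r.2]⟩ : SU)) ?_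
    intro a b hab
    exact Subtype.ext (congrArg (Subtype.val : SU → AbsoluteValue M ℝ) hab)
  set Sval : SV → ℕ := fun r =>
    ∑ᶠ t : {t : AbsoluteValue M ℝ // ∀ x, t (algebraMap L M x) = r.1 x},
      localDegree r.1 t.1 t.2 with hSval
  have hle : ∀ r : SV, Sval r ≤ Module.finrank L M := fun r =>
    sum_localDegree_le r.1 (hntV r) (hfinT r)
  -- Fubini over the restriction map
  set ρ : SU → SV := fun s => ⟨comapAbs s.1, fun x => by
    have hx : comapAbs (K := L) s.1 (algebraMap K L x)
        = s.1 (algebraMap L M (algebraMap K L x)) := rfl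
    rw [hx, ← IsScalarTower.algebraMap_apply, s.2]⟩ with hρ
  have hfib : ∑ s : SU, localDegree v s.1 s.2 =
      ∑ r : SV, ∑ s : {s : SU // ρ s = r}, localDegree v s.1.1 s.1.2 :=
    (Fintype.sum_fiberwise ρ _).symm
  have hinner : ∀ r : SV, ∑ s : {s : SU // ρ s = r}, localDegree v s.1.1 s.1.2 =
      localDegree v r.1 r.2 * Sval r := by
    intro r
    haveI := hfinT r
    haveI : Fintype {t : AbsoluteValue M ℝ // ∀ x, t (algebraMap L M x) = r.1 x} :=
      Fintype.ofFinite _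
    have hSv : Sval r = ∑ t : {t : AbsoluteValue M ℝ // ∀ x, t (algebraMap L M x) = r.1 x},
        localDegree r.1 t.1 t.2 := finsum_eq_sum_of_fintype _
    rw [hSv, Finset.mul_sum]
    let φ : {s : SU // ρ s = r} ≃ {t : AbsoluteValue M ℝ // ∀ x, t (algebraMap L M x) = r.1 x} :=
      { toFun := fun s => ⟨s.1.1, fun x => by
          have hval : comapAbs (K := L) s.1.1 = r.1 := congrArg Subtype.val s.2
          rw [← hval]; rfl⟩
        invFun := fun t => ⟨⟨t.1, fun x => by
          rw [IsScalarTower.algebraMap_apply K L M, t.2, r.2]⟩, by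
          apply Subtype.ext
          show comapAbs t.1 = r.1
          ext x
          exact t.2 x⟩
        left_inv := fun s => Subtype.ext (Subtype.ext rfl)
        right_inv := fun t => Subtype.ext rfl }
    refine Fintype.sum_equiv φ _ _ fun s => ?_
    exact localDegree_tower v r.1 s.1.1 r.2 (φ s).2 s.1.2
  -- assemble
  rw [finsum_eq_sum_of_fintype] at hL hM
  rw [hfib] at hM
  have hM' : Module.finrank K M = ∑ r : SV, localDegree v r.1 r.2 * Sval r := by
    rw [hM]
    exact Finset.sum_congr rfl fun r _ => hinner r
  have htot : Module.finrank K L * Module.finrank L M = Module.finrank K M :=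
    Module.finrank_mul_finrank K L M
  have hEq : ∑ r : SV, localDegree v r.1 r.2 * Sval r =
      ∑ r : SV, localDegree v r.1 r.2 * Module.finrank L M := by
    rw [← hM', ← htot, hL, Finset.sum_mul]
  have hall := (Finset.sum_eq_sum_iff_of_le
    (fun (r : SV) _ => Nat.mul_le_mul_left _ (hle r))).mp hEq
  have hw0 := hall ⟨w, hw⟩ (Finset.mem_univ _)
  have hcancel : Sval ⟨w, hw⟩ = Module.finrank L M :=
    Nat.eq_of_mul_eq_mul_left (hposV ⟨w, hw⟩) hw0
  exact hcancel.symm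

end Stage7

/-- if `v` is a well-behaved absolute value on `K` and `L/K` is a finite
extension, then every absolute value `w` on `L` extending `v` is also well-behaved. -/
theorem stmt_2 {K : Type u} [Field K] {L : Type u} [Field L] [Algebra K L]
    [FiniteDimensional K L] (v : AbsoluteValue K ℝ) (hv : IsWellBehaved K v)
    (w : AbsoluteValue L ℝ) (hw : ∀ x, w (algebraMap K L x) = v x) :
    IsWellBehaved L w := by
  exact stmt_2' v hv w hw
end
end

section
/- Let V be a Noetherian scheme, U ⊆ V an open subset, and Z = V \ U with the reduced closed subscheme structure. Let W_1, W_2 be closed subschemes of V such that W_1 ∩ U = W_2 ∩ U as closed subschemes of U. Then there exists a non-negative integer n such that I_Z^n · I_{W_2} ⊆ I_{W_1} (i.e., W_1 ⊆ W_2 + nZ as closed subschemes). -/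
open AlgebraicGeometry CategoryTheory Opposite

/-- The ideal of sections over `V'` vanishing at every point of `V'` outside `U`, i.e. the
ideal of the reduced closed subscheme structure on `Z = V \ U`, evaluated on `V'`. -/
noncomputable def vanishingIdealOfComplement (V : AlgebraicGeometry.Scheme) (U V' : V.Opens) :
    Ideal (V.presheaf.obj (op V')) :=
  ⨅ (x : {x : V // x ∈ V' ∧ x ∉ U}),
    Ideal.comap (V.presheaf.germ V' x.1 x.2.1).hom (IsLocalRing.maximalIdeal _)

namespace Stmt12Aux

open TopologicalSpace

/-- An elementary commutative-algebra fact: if for every `g ∈ I` and `s ∈ b` some power of `g`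
multiplies `s` into `a`, then (in a Noetherian ring) a single power of `I` multiplies `b`
into `a`. -/
theorem alg_lemma {R : Type*} [CommRing R] [IsNoetherianRing R] (I a b : Ideal R)
    (h : ∀ g ∈ I, ∀ s ∈ b, ∃ m : ℕ, g ^ m * s ∈ a) : ∃ n : ℕ, I ^ n * b ≤ a := by
  have hrad : I ≤ (a.colon b).radical := by
    intro g hg
    obtain ⟨S, hS⟩ := isNoetherian_def.mp ‹_› b
    choose m hm using fun s : {x // x ∈ S} => h g hg s (hS ▸ Ideal.subset_span s.2)
    refine Ideal.mem_radical_iff.mpr ⟨S.attach.sup m, Submodule.mem_colon.mpr ?_⟩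
    intro p hp
    rw [smul_eq_mul]
    rw [← hS] at hp
    induction hp using Submodule.span_induction with
    | mem x hx =>
        have hle : m ⟨x, hx⟩ ≤ S.attach.sup m := Finset.le_sup (Finset.mem_attach S ⟨x, hx⟩)
        rw [← pow_sub_mul_pow g hle, mul_assoc]
        exact Ideal.mul_mem_left _ _ (hm ⟨x, hx⟩)
    | zero => simpa using Ideal.zero_mem a
    | add x y hx hy ihx ihy => rw [mul_add]; exact Ideal.add_mem _ ihx ihy
    | smul c x hx ihx =>
        rw [smul_eq_mul, mul_comm c x, ← mul_assoc]
        exact Ideal.mul_mem_right _ _ ihx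
  obtain ⟨n, hn⟩ :=
    Ideal.exists_pow_le_of_le_radical_of_fg hrad (isNoetherian_def.mp ‹_› I)
  refine ⟨n, le_trans (Ideal.mul_mono hn le_rfl) (Ideal.mul_le.mpr fun r hr s hs => ?_)⟩
  simpa [smul_eq_mul] using Submodule.mem_colon.mp hr s hs

variable {V W : AlgebraicGeometry.Scheme}

/-- Restriction maps kernels of a morphism's component maps into kernels. -/
theorem ker_res (ι : W ⟶ V) {V' V'' : V.Opens} (h : V'' ≤ V')
    {s : Γ(V, V')} (hs : s ∈ RingHom.ker (ι.app V').hom) :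
    V.presheaf.map (homOfLE h).op s ∈ RingHom.ker (ι.app V'').hom := by
  rw [RingHom.mem_ker] at hs ⊢
  have hnat := congrArg (fun φ : Γ(V, V') ⟶ Γ(W, ι ⁻¹ᵁ V'') => φ s)
    (ι.naturality (homOfLE h).op)
  simp only [CommRingCat.comp_apply] at hnat
  rw [hnat, hs, map_zero]

/-- Restriction maps the vanishing ideal into the vanishing ideal. -/
theorem vanishing_res (U : V.Opens) {V' V'' : V.Opens} (h : V'' ≤ V') {s : Γ(V, V')}
    (hs : s ∈ vanishingIdealOfComplement V U V') :
    V.presheaf.map (homOfLE h).op s ∈ vanishingIdealOfComplement V U V'' := by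
  refine (Submodule.mem_iInf _).mpr ?_
  rintro ⟨y, hy1, hy2⟩
  have h1 := (Submodule.mem_iInf _).mp hs ⟨y, h hy1, hy2⟩
  rw [Ideal.mem_comap] at h1 ⊢
  rwa [TopCat.Presheaf.germ_res_apply]

/-- A section in the vanishing ideal of `Z = V \ U` is invertible only inside `U`:
its basic open is contained in `U`. -/
theorem basicOpen_le_of_vanishing {U V' : V.Opens} {g : Γ(V, V')}
    (hg : g ∈ vanishingIdealOfComplement V U V') : V.basicOpen g ≤ U := by
  intro y hy
  by_contra hyU
  have hyV' : y ∈ V' := V.basicOpen_le g hy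
  have h1 := (Submodule.mem_iInf _).mp hg ⟨y, hyV', hyU⟩
  rw [Ideal.mem_comap] at h1
  exact mem_nonunits_iff.mp ((IsLocalRing.mem_maximalIdeal _).mp h1)
    ((V.mem_basicOpen g y hyV').mp hy)

/-- Quasi-coherence of the kernel ideal: if a section of an affine open vanishes (under `ι.app`)
on a basic open, then after multiplying with a power of `g` it vanishes on the whole affine
open. -/
theorem exists_pow_mul_mem_ker (ι : W ⟶ V) [IsAffineHom ι] {V₀ : V.Opens}
    (hV₀ : IsAffineOpen V₀) (g s : Γ(V, V₀))
    (hs : V.presheaf.map (homOfLE (V.basicOpen_le g)).op s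
      ∈ RingHom.ker (ι.app (V.basicOpen g)).hom) :
    ∃ m : ℕ, g ^ m * s ∈ RingHom.ker (ι.app V₀).hom := by
  have hA : IsAffineOpen (ι ⁻¹ᵁ V₀) := hV₀.preimage ι
  have hbo : ι ⁻¹ᵁ V.basicOpen g = W.basicOpen (ι.app V₀ g) := Scheme.preimage_basicOpen ι g
  have e : W.basicOpen (ι.app V₀ g) ≤ ι ⁻¹ᵁ V₀ := by
    rw [← hbo]
    exact ((Opens.map ι.base).map (homOfLE (V.basicOpen_le g))).le
  have := hA.isLocalization_basicOpen (ι.app V₀ g)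
  have h0 : ι.appLE V₀ (W.basicOpen (ι.app V₀ g)) e s = 0 := by
    have e' : W.basicOpen (ι.app V₀ g) ≤ ι ⁻¹ᵁ V.basicOpen g := le_of_eq hbo.symm
    have hm : ι.appLE V₀ (W.basicOpen (ι.app V₀ g)) e =
        V.presheaf.map (homOfLE (V.basicOpen_le g)).op ≫
          ι.appLE (V.basicOpen g) (W.basicOpen (ι.app V₀ g)) e' :=
      (Scheme.Hom.map_appLE ι e' (homOfLE (V.basicOpen_le g)).op).symm
    rw [hm, comp_apply]
    simp only [Scheme.Hom.appLE, comp_apply]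
    rw [RingHom.mem_ker] at hs
    rw [hs, map_zero]
  have key : algebraMap Γ(W, ι ⁻¹ᵁ V₀) Γ(W, W.basicOpen (ι.app V₀ g)) (ι.app V₀ s) = 0 := by
    rw [RingHom.algebraMap_toAlgebra]
    exact h0
  obtain ⟨⟨c, hcmem⟩, hc⟩ :=
    (IsLocalization.map_eq_zero_iff (Submonoid.powers (ι.app V₀ g)) _ _).mp key
  rw [Submonoid.mem_powers_iff] at hcmem
  obtain ⟨k, rfl⟩ := hcmem
  refine ⟨k, ?_⟩
  rw [RingHom.mem_ker, map_mul, map_pow]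
  exact hc

/-- A representation of a section over a basic open as `t / g ^ k`. -/
theorem exists_rep {V₀ : V.Opens} (hV₀ : IsAffineOpen V₀) (g : Γ(V, V₀))
    (s : Γ(V, V.basicOpen g)) :
    ∃ (t : Γ(V, V₀)) (k : ℕ),
      V.presheaf.map (homOfLE (V.basicOpen_le g)).op t
        = s * V.presheaf.map (homOfLE (V.basicOpen_le g)).op (g ^ k) := by
  have := hV₀.isLocalization_basicOpen g
  obtain ⟨⟨t, c⟩, h⟩ := IsLocalization.surj (M := Submonoid.powers g)
    (S := Γ(V, V.basicOpen g)) s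
  have hcmem := c.2
  rw [Submonoid.mem_powers_iff] at hcmem
  obtain ⟨k, hk⟩ := hcmem
  refine ⟨t, k, ?_⟩
  rw [RingHom.algebraMap_toAlgebra] at h
  rw [← h, hk]

/-- If `germ s * germ g ^ k = germ t` with `t ∈ J`, then, `germ g` being invertible at a point
of the basic open, `germ s` lies in the extension of `J` along the germ map. -/
theorem germ_mem_map {V₀ : V.Opens} {g : Γ(V, V₀)} {x : V} (hx : x ∈ V.basicOpen g)
    {J : Ideal Γ(V, V₀)} {s : Γ(V, V.basicOpen g)} {t : Γ(V, V₀)} {k : ℕ}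
    (htJ : t ∈ J)
    (hrel : V.presheaf.germ (V.basicOpen g) x hx s
        * V.presheaf.germ V₀ x (V.basicOpen_le g hx) g ^ k
        = V.presheaf.germ V₀ x (V.basicOpen_le g hx) t) :
    V.presheaf.germ (V.basicOpen g) x hx s
      ∈ Ideal.map (V.presheaf.germ V₀ x (V.basicOpen_le g hx)).hom J := by
  obtain ⟨u, hu⟩ := (V.mem_basicOpen g x (V.basicOpen_le g hx)).mp hx
  have hkey : V.presheaf.germ (V.basicOpen g) x hx s
      = V.presheaf.germ V₀ x (V.basicOpen_le g hx) t * (↑(u⁻¹) : _) ^ k := by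
    rw [← hrel, ← hu, mul_assoc, ← mul_pow, Units.mul_inv, one_pow, mul_one]
  rw [hkey]
  exact Ideal.mul_mem_right _ _ (Ideal.mem_map_of_mem _ htJ)

/-- The germ at `x` of `t` in terms of a representation `res t = s * res (g ^ k)`. -/
theorem germ_of_rep {V₀ : V.Opens} {g : Γ(V, V₀)} {s : Γ(V, V.basicOpen g)} {t : Γ(V, V₀)}
    {k : ℕ}
    (ht : V.presheaf.map (homOfLE (V.basicOpen_le g)).op t
      = s * V.presheaf.map (homOfLE (V.basicOpen_le g)).op (g ^ k))
    (y : V) (hy : y ∈ V.basicOpen g) :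
    V.presheaf.germ V₀ y (V.basicOpen_le g hy) t
      = V.presheaf.germ (V.basicOpen g) y hy s
        * V.presheaf.germ V₀ y (V.basicOpen_le g hy) g ^ k := by
  have h := congrArg (V.presheaf.germ (V.basicOpen g) y hy) ht
  rwa [TopCat.Presheaf.germ_res_apply, map_mul, TopCat.Presheaf.germ_res_apply, map_pow] at h

/-- The germ (at a point of a basic open of an affine open `V₀`) of a section in the vanishing
ideal of the basic open lies in the extension of the vanishing ideal of `V₀`. -/
theorem germ_vanishing_mem {U : V.Opens} {V₀ : V.Opens} (hV₀ : IsAffineOpen V₀)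
    (g : Γ(V, V₀)) {x : V} (hx : x ∈ V.basicOpen g) {s : Γ(V, V.basicOpen g)}
    (hs : s ∈ vanishingIdealOfComplement V U (V.basicOpen g)) :
    V.presheaf.germ (V.basicOpen g) x hx s
      ∈ Ideal.map (V.presheaf.germ V₀ x (V.basicOpen_le g hx)).hom
          (vanishingIdealOfComplement V U V₀) := by
  obtain ⟨t, k, ht⟩ := exists_rep hV₀ g s
  refine germ_mem_map hx (t := t * g) (k := k + 1) ?_ ?_
  · refine (Submodule.mem_iInf _).mpr ?_
    rintro ⟨y, hyV₀, hyU⟩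
    rw [Ideal.mem_comap, map_mul]
    by_cases hyD : y ∈ V.basicOpen g
    · have h1 := germ_of_rep ht y hyD
      have hsy := (Submodule.mem_iInf _).mp hs ⟨y, hyD, hyU⟩
      rw [Ideal.mem_comap] at hsy
      have h1' : V.presheaf.germ V₀ y hyV₀ t
          = V.presheaf.germ (V.basicOpen g) y hyD s * V.presheaf.germ V₀ y hyV₀ g ^ k := h1
      rw [h1', mul_assoc]
      exact Ideal.mul_mem_right _ _ hsy
    · have hnu : ¬IsUnit (V.presheaf.germ V₀ y hyV₀ g) :=
        fun h => hyD ((V.mem_basicOpen g y hyV₀).mpr h)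
      exact Ideal.mul_mem_left _ _
        ((IsLocalRing.mem_maximalIdeal _).mpr (mem_nonunits_iff.mpr hnu))
  · rw [map_mul]
    have h2 := germ_of_rep ht x hx
    rw [h2]
    ring

/-- The germ (at a point of a basic open of an affine open `V₀`) of a section in the kernel over
the basic open lies in the extension of the kernel over `V₀`. -/
theorem germ_ker_mem (ι : W ⟶ V) [IsAffineHom ι] {V₀ : V.Opens} (hV₀ : IsAffineOpen V₀)
    (g : Γ(V, V₀)) {x : V} (hx : x ∈ V.basicOpen g) {s : Γ(V, V.basicOpen g)}
    (hs : s ∈ RingHom.ker (ι.app (V.basicOpen g)).hom) :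
    V.presheaf.germ (V.basicOpen g) x hx s
      ∈ Ideal.map (V.presheaf.germ V₀ x (V.basicOpen_le g hx)).hom
          (RingHom.ker (ι.app V₀).hom) := by
  obtain ⟨t, k, ht⟩ := exists_rep hV₀ g s
  have htker : V.presheaf.map (homOfLE (V.basicOpen_le g)).op t
      ∈ RingHom.ker (ι.app (V.basicOpen g)).hom := by
    rw [ht]
    exact Ideal.mul_mem_right _ _ hs
  obtain ⟨m, hm⟩ := exists_pow_mul_mem_ker ι hV₀ g t htker
  refine germ_mem_map hx (t := g ^ m * t) (k := k + m) hm ?_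
  rw [map_mul, map_pow]
  have h2 := germ_of_rep ht x hx
  rw [h2]
  ring

/-- The ideal of the stalk at `x` generated by germs of local sections killed by `ι`. -/
def germKer (ι : W ⟶ V) (x : V) : Ideal (V.presheaf.stalk x) where
  carrier := {γ | ∃ (V'' : V.Opens) (hx : x ∈ V'') (s : Γ(V, V'')),
    s ∈ RingHom.ker (ι.app V'').hom ∧ V.presheaf.germ V'' x hx s = γ}
  zero_mem' := ⟨⊤, trivial, 0, by simp [RingHom.mem_ker], map_zero _⟩
  add_mem' := by
    rintro γ₁ γ₂ ⟨U₁, hx₁, s₁, hk₁, rfl⟩ ⟨U₂, hx₂, s₂, hk₂, rfl⟩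
    refine ⟨U₁ ⊓ U₂, Opens.mem_inf.mpr ⟨hx₁, hx₂⟩,
      V.presheaf.map (homOfLE inf_le_left).op s₁ +
        V.presheaf.map (homOfLE inf_le_right).op s₂,
      add_mem (ker_res ι inf_le_left hk₁) (ker_res ι inf_le_right hk₂), ?_⟩
    rw [map_add, TopCat.Presheaf.germ_res_apply, TopCat.Presheaf.germ_res_apply]
  smul_mem' := by
    rintro c γ ⟨U₁, hx₁, s₁, hk₁, rfl⟩
    obtain ⟨U₂, hx₂, t, rfl⟩ := V.presheaf.germ_exist c
    refine ⟨U₂ ⊓ U₁, Opens.mem_inf.mpr ⟨hx₂, hx₁⟩,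
      V.presheaf.map (homOfLE inf_le_left).op t *
        V.presheaf.map (homOfLE inf_le_right).op s₁,
      Ideal.mul_mem_left _ _ (ker_res ι inf_le_right hk₁), ?_⟩
    rw [map_mul, TopCat.Presheaf.germ_res_apply, TopCat.Presheaf.germ_res_apply, smul_eq_mul]

theorem map_germ_ker_le (ι : W ⟶ V) {x : V} {V₀ : V.Opens} (hx : x ∈ V₀) :
    Ideal.map (V.presheaf.germ V₀ x hx).hom (RingHom.ker (ι.app V₀).hom) ≤ germKer ι x :=
  Ideal.map_le_iff_le_comap.mpr fun s hs => ⟨V₀, hx, s, hs, rfl⟩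

/-- Unwinding membership in `germKer`: the section itself is killed on a small neighbourhood. -/
theorem germKer_unwind (ι : W ⟶ V) {x : V} {V' : V.Opens} (hx : x ∈ V')
    (f : Γ(V, V')) (hγ : V.presheaf.germ V' x hx f ∈ germKer ι x) :
    ∃ (V'' : V.Opens) (_ : x ∈ V'') (hle : V'' ≤ V'),
      V.presheaf.map (homOfLE hle).op f ∈ RingHom.ker (ι.app V'').hom := by
  obtain ⟨V₀, hx₀, s, hsker, hgs⟩ := hγ
  obtain ⟨Wo, hxW, iU, iV, heq⟩ := V.presheaf.germ_eq x hx₀ hx s f hgs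
  refine ⟨Wo, hxW, iV.le, ?_⟩
  have hiV : homOfLE iV.le = iV := Subsingleton.elim _ _
  have hiU : homOfLE iU.le = iU := Subsingleton.elim _ _
  rw [hiV, ← heq, ← hiU]
  exact ker_res ι iU.le hsker

/-- If a section is locally in the kernel, it is in the kernel (sheaf condition). -/
theorem ker_of_locally_ker (ι : W ⟶ V) {V' : V.Opens} (f : Γ(V, V'))
    (h : ∀ x ∈ V', ∃ (V'' : V.Opens) (_ : x ∈ V'') (hle : V'' ≤ V'),
      V.presheaf.map (homOfLE hle).op f ∈ RingHom.ker (ι.app V'').hom) :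
    f ∈ RingHom.ker (ι.app V').hom := by
  rw [RingHom.mem_ker]
  apply TopCat.Presheaf.section_ext W.sheaf (ι ⁻¹ᵁ V') (ι.app V' f) 0
  intro w hw
  obtain ⟨V'', hx'', hle, hker⟩ := h (ι.base w) hw
  have hw'' : w ∈ ι ⁻¹ᵁ V'' := hx''
  have hnat := congrArg (fun φ : Γ(V, V') ⟶ Γ(W, ι ⁻¹ᵁ V'') => φ f)
    (ι.naturality (homOfLE hle).op)
  simp only [CommRingCat.comp_apply, Quiver.Hom.unop_op] at hnat
  have hres : W.presheaf.germ (ι ⁻¹ᵁ V') w hw (ι.app V' f)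
      = W.presheaf.germ (ι ⁻¹ᵁ V'') w hw''
          (W.presheaf.map ((Opens.map ι.base).map (homOfLE hle)).op (ι.app V' f)) := by
    rw [TopCat.Presheaf.germ_res_apply]
  rw [RingHom.mem_ker] at hker
  show W.presheaf.germ (ι ⁻¹ᵁ V') w hw (ι.app V' f)
      = W.presheaf.germ (ι ⁻¹ᵁ V') w hw 0
  rw [hres, ← hnat, hker, map_zero, map_zero]

end Stmt12Aux

open Stmt12Aux in
/-- let `V` be a Noetherian scheme, `U ⊆ V` open and `Z = V \ U` with its reduced
structure. If two closed subschemes `W₁, W₂` of `V` agree over `U` (their ideal sheaves, the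
kernels of the corresponding maps of sections, agree on all opens contained in `U`), then there
is `n ≥ 0` with `I_Z^n · I_{W₂} ⊆ I_{W₁}`, i.e. `W₁ ⊆ W₂ + nZ`. -/
theorem stmt_12 (V : AlgebraicGeometry.Scheme) [AlgebraicGeometry.IsNoetherian V]
    (U : V.Opens) (W₁ W₂ : AlgebraicGeometry.Scheme)
    (ι₁ : W₁ ⟶ V) (ι₂ : W₂ ⟶ V) [IsClosedImmersion ι₁] [IsClosedImmersion ι₂]
    (hagree : ∀ V' : V.Opens, V' ≤ U →
      RingHom.ker (ι₁.app V').hom = RingHom.ker (ι₂.app V').hom) :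
    ∃ n : ℕ, ∀ V' : V.Opens,
      (vanishingIdealOfComplement V U V') ^ n * RingHom.ker (ι₂.app V').hom ≤
        RingHom.ker (ι₁.app V').hom := by
  classical
  -- Per affine open, an exponent works, by the algebra lemma plus quasi-coherence.
  have key : ∀ A : V.affineOpens, ∃ n : ℕ,
      (vanishingIdealOfComplement V U A) ^ n * RingHom.ker (ι₂.app A).hom ≤
        RingHom.ker (ι₁.app A).hom := by
    intro A
    haveI : IsNoetherianRing Γ(V, A) := IsLocallyNoetherian.component_noetherian A
    apply alg_lemma
    intro g hg s hs
    have hgU : V.basicOpen g ≤ U := basicOpen_le_of_vanishing hg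
    have h1 : V.presheaf.map (homOfLE (V.basicOpen_le g)).op s
        ∈ RingHom.ker (ι₂.app (V.basicOpen g)).hom := ker_res ι₂ (V.basicOpen_le g) hs
    rw [← hagree _ hgU] at h1
    exact exists_pow_mul_mem_ker ι₁ A.2 g s h1
  choose nf hnf using key
  -- A finite affine subcover.
  have hcov : (Set.univ : Set V) ⊆ ⋃ A : V.affineOpens, ((A : V.Opens) : Set V) := by
    intro x _
    have hx : x ∈ (⊤ : V.Opens) := trivial
    rw [← iSup_affineOpens_eq_top V] at hx
    exact Set.mem_iUnion.mpr (TopologicalSpace.Opens.mem_iSup.mp hx)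
  obtain ⟨T, hT⟩ := isCompact_univ.elim_finite_subcover
    (fun A : V.affineOpens => ((A : V.Opens) : Set V))
    (fun A => (A : V.Opens).isOpen) hcov
  refine ⟨T.sup nf, ?_⟩
  intro V' f hf
  apply ker_of_locally_ker
  intro x hx
  by_cases hxU : x ∈ U
  · refine ⟨V' ⊓ U, ⟨hx, hxU⟩, inf_le_left, ?_⟩
    have hfb : f ∈ RingHom.ker (ι₂.app V').hom := Ideal.mul_le_right hf
    rw [hagree (V' ⊓ U) inf_le_right]
    exact ker_res ι₂ inf_le_left hfb
  · -- the point lies in `Z`; pick an affine open from the finite cover and a basic open in it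
    obtain ⟨A, hAT, hxA⟩ := Set.mem_iUnion₂.mp (hT (Set.mem_univ x))
    obtain ⟨g, hgle, hxg⟩ := A.2.exists_basicOpen_le (V := V' ⊓ (A : V.Opens))
      (⟨x, hx, hxA⟩ : (V' ⊓ (A : V.Opens) : V.Opens)) hxA
    have hDV' : V.basicOpen g ≤ V' := hgle.trans inf_le_left
    set n := T.sup nf with hn
    have keyA : (vanishingIdealOfComplement V U A) ^ n * RingHom.ker (ι₂.app A).hom ≤
        RingHom.ker (ι₁.app A).hom :=
      le_trans (Ideal.mul_mono (Ideal.pow_le_pow_right (Finset.le_sup hAT)) le_rfl) (hnf A)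
    -- restrict `f` to the basic open
    have hf' : V.presheaf.map (homOfLE hDV').op f
        ∈ (vanishingIdealOfComplement V U (V.basicOpen g)) ^ n
            * RingHom.ker (ι₂.app (V.basicOpen g)).hom := by
      have h1 := Ideal.mem_map_of_mem (V.presheaf.map (homOfLE hDV').op).hom hf
      rw [Ideal.map_mul, Ideal.map_pow] at h1
      refine Ideal.mul_mono (Ideal.pow_right_mono ?_ n) ?_ h1
      · exact Ideal.map_le_iff_le_comap.mpr fun u hu => vanishing_res U hDV' hu
      · exact Ideal.map_le_iff_le_comap.mpr fun u hu => ker_res ι₂ hDV' hu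
    -- pass to germs at `x`
    have hγ : V.presheaf.germ V' x hx f ∈ germKer ι₁ x := by
      have hgx : V.presheaf.germ V' x hx f
          = V.presheaf.germ (V.basicOpen g) x hxg (V.presheaf.map (homOfLE hDV').op f) := by
        rw [TopCat.Presheaf.germ_res_apply]
      rw [hgx]
      have h2 := Ideal.mem_map_of_mem (V.presheaf.germ (V.basicOpen g) x hxg).hom hf'
      rw [Ideal.map_mul, Ideal.map_pow] at h2
      have step : (Ideal.map (V.presheaf.germ (A : V.Opens) x (V.basicOpen_le g hxg)).hom
            (vanishingIdealOfComplement V U A)) ^ n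
          * Ideal.map (V.presheaf.germ (A : V.Opens) x (V.basicOpen_le g hxg)).hom
            (RingHom.ker (ι₂.app A).hom) ≤ germKer ι₁ x := by
        rw [← Ideal.map_pow, ← Ideal.map_mul]
        exact le_trans (Ideal.map_mono keyA) (map_germ_ker_le ι₁ (V.basicOpen_le g hxg))
      refine step (Ideal.mul_mono (Ideal.pow_right_mono ?_ n) ?_ h2)
      · exact Ideal.map_le_iff_le_comap.mpr fun u hu => germ_vanishing_mem A.2 g hxg hu
      · exact Ideal.map_le_iff_le_comap.mpr fun u hu => germ_ker_mem ι₂ A.2 g hxg hu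
    exact germKer_unwind ι₁ hx f hγ
end

section
/- Let U = Spec A be an affine scheme over a finite extension L of K, and suppose f_1,...,f_r ∈ A generate the unit ideal, with principal opens U_i = Spec A_{f_i} covering U. Let B = (B_v)_v be an M_K-bounded family of subsets of U. Then setting B^i_v = {x ∈ B_v : |f_i(x)|_v = max_j |f_j(x)|_v}, each (B^i_v)_v is an M_K-bounded family of subsets of U_i, and ∪_{i=1}^r B^i_v = B_v for every v. -/
noncomputable section

open scoped Classical

universe u

/-- Nonarchimedean criterion: an absolute value bounded by `1` on the naturals satisfies the
ultrametric inequality. -/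
lemma abs_nonarch_of_natCast {F : Type*} [Field F] (v : AbsoluteValue F ℝ)
    (h : ∀ n : ℕ, v (n : F) ≤ 1) : ∀ x y : F, v (x + y) ≤ max (v x) (v y) := by
  haveI : IsUltrametricDist (WithAbs v) :=
    IsUltrametricDist.isUltrametricDist_of_forall_norm_natCast_le_one (R := WithAbs v)
      (fun n => h n)
  intro x y
  exact IsUltrametricDist.norm_add_le_max ((WithAbs.equiv v).symm x) ((WithAbs.equiv v).symm y)

/-- Sum bound for nonarchimedean absolute values. -/
lemma abs_nonarch_sum {F : Type*} [Field F] {ι : Type*} (v : AbsoluteValue F ℝ)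
    (hna : ∀ x y : F, v (x + y) ≤ max (v x) (v y))
    [DecidableEq ι] (s : Finset ι) (g : ι → F) {C : ℝ} (hC : 0 ≤ C)
    (hg : ∀ i ∈ s, v (g i) ≤ C) :
    v (∑ i ∈ s, g i) ≤ C := by
  induction s using Finset.induction_on with
  | empty => simpa using hC
  | insert a s hx ih =>
    rw [Finset.sum_insert hx]
    exact (hna _ _).trans (max_le (hg a (Finset.mem_insert_self a s))
      (ih fun i hi => hg i (Finset.mem_insert_of_mem hi)))

/-- The set of places in a proper set `M` that are unbounded on the naturals is finite. -/
lemma finite_arch {K : Type u} [Field K] (M : Set (AbsoluteValue K ℝ))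
    (hM : IsProperAbsSet M) :
    {v₀ ∈ M | ¬ ∀ m : ℕ, v₀ (m : K) ≤ 1}.Finite := by
  haveI : CharP K (ringChar K) := ringChar.charP K
  rcases CharP.char_is_prime_or_zero K (ringChar K) with hp | hp
  · -- positive characteristic: the set is empty
    convert Set.finite_empty
    rw [Set.eq_empty_iff_forall_notMem]
    rintro v₀ ⟨-, hbad⟩
    apply hbad
    intro m
    set p := ringChar K
    haveI : Fact p.Prime := ⟨hp⟩
    have hmod : ((m ^ p : ℕ) : K) = (m : K) := by
      apply CharP.natCast_eq_natCast' K p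
      have : ((m ^ p : ℕ) : ZMod p) = ((m : ℕ) : ZMod p) := by
        push_cast
        exact ZMod.pow_card _
      exact (ZMod.natCast_eq_natCast_iff _ _ _).1 this
    have hpow : v₀ (m : K) ^ p = v₀ (m : K) := by
      rw [← map_pow, ← Nat.cast_pow, hmod]
    by_contra hgt
    push_neg at hgt
    have h2 : v₀ (m : K) < v₀ (m : K) ^ p :=
      lt_self_pow₀ hgt hp.one_lt
    rw [hpow] at h2
    exact lt_irrefl _ h2
  · -- characteristic zero
    haveI h0 : CharP K 0 := hp ▸ (ringChar.charP K)
    haveI : CharZero K := CharP.charP_to_charZero K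
    apply Set.Finite.subset (hM.2.2.2 (2 : K) two_ne_zero)
    rintro v₀ ⟨hvM, hbad⟩
    push_neg at hbad
    obtain ⟨m, hm⟩ := hbad
    have hm0 : (m : K) ≠ 0 := by
      intro h; rw [h, map_zero] at hm; linarith
    have hminv : v₀ ((((m : ℚ)⁻¹ : ℚ)) : K) < 1 := by
      have : ((((m : ℚ)⁻¹ : ℚ)) : K) = ((m : K))⁻¹ := by push_cast; ring
      rw [this, map_inv₀]
      exact inv_lt_one_of_one_lt₀ hm
    rcases (hM.2.1 v₀ hvM).2.2 inferInstance with htriv | ⟨p, hpp, hpad⟩ | harch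
    · exfalso
      refine htriv ((m : ℚ)⁻¹) ?_ hminv
      simp only [ne_eq, inv_eq_zero, Nat.cast_eq_zero]
      intro h; apply hm0; simp [h]
    · exfalso
      have := (hpad ((m : ℚ)⁻¹)).1 hminv
      have hmq : (m : ℚ) ≠ 0 := by
        intro h; apply hm0
        have : ((m : ℚ) : K) = 0 := by rw [h]; simp
        simpa using this
      haveI : Fact p.Prime := ⟨hpp⟩
      have h1 : padicNorm p ((m : ℚ)⁻¹) = 1 / padicNorm p (m : ℚ) := by
        rw [inv_eq_one_div, padicNorm.div, padicNorm.one]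
      have h2 : padicNorm p (m : ℚ) ≤ 1 := padicNorm.of_nat m
      have h3 : 0 < padicNorm p (m : ℚ) :=
        lt_of_le_of_ne (padicNorm.nonneg _) (Ne.symm (padicNorm.nonzero hmq))
      have h4 : (1 : ℚ) ≤ padicNorm p ((m : ℚ)⁻¹) := by
        rw [h1]; exact (one_le_div h3).mpr h2
      have h5 : ((1:ℚ) : ℝ) ≤ (padicNorm p ((m : ℚ)⁻¹) : ℝ) := by exact_mod_cast h4
      push_cast at h5
      linarith
    · constructor
      · exact hvM
      · have h2 : v₀ ((((2 : ℚ)⁻¹ : ℚ)) : K) < 1 := by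
          rw [harch]
          rw [abs_lt]; norm_num
        have : ((((2 : ℚ)⁻¹ : ℚ)) : K) = ((2 : K))⁻¹ := by push_cast; ring
        rw [this, map_inv₀] at h2
        have hpos : 0 < v₀ (2 : K) := v₀.pos two_ne_zero
        have h3 : (1:ℝ) < v₀ (2 : K) := by
          nlinarith [mul_inv_cancel₀ (ne_of_gt hpos)]
        exact ne_of_gt h3

/-- let `U = Spec A` be affine over a finite extension `L` of `K` (all inside a
fixed algebraic closure `K̄` of `K`), and let `f_1, …, f_r ∈ A` generate the unit ideal, so the
principal opens `U_i = Spec A_{f_i}` cover `U`. If `B = (B_v)_v` is an `M_K`-bounded family of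
subsets of `U(K̄)` (identified with the `L`-algebra homomorphisms `A → K̄`), then the sets
`B^i_v = {x ∈ B_v : |f_i(x)|_v = max_j |f_j(x)|_v}` form `M_K`-bounded families of subsets of
the `U_i` (every regular function `α / f_i^n` on `U_i` is bounded on them, with constants
uniform over `v | v₀` and `≤ 1` for all but finitely many `v₀ ∈ M_K`), and
`∪_{i} B^i_v = B_v` for every `v`. -/
theorem stmt_18 {K : Type u} [Field K] {L : Type u} [Field L] [Algebra K L]
    [FiniteDimensional K L]
    {Kbar : Type u} [Field Kbar] [Algebra K Kbar] [IsAlgClosure K Kbar]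
    [Algebra L Kbar] [IsScalarTower K L Kbar]
    (M : Set (AbsoluteValue K ℝ)) (hM : IsProperAbsSet M)
    (A : Type u) [CommRing A] [Algebra L A]
    (r : ℕ) (f : Fin r → A) (hgen : Ideal.span (Set.range f) = ⊤)
    (B : AbsoluteValue Kbar ℝ → Set (A →ₐ[L] Kbar))
    (hBbdd : ∀ a : A, ∀ v₀ ∈ M, ∃ C : ℝ,
      ∀ v : AbsoluteValue Kbar ℝ, comapAbs v = v₀ → ∀ x ∈ B v, v (x a) ≤ C)
    (hBone : ∀ a : A,
      {v₀ ∈ M | ¬ ∀ v : AbsoluteValue Kbar ℝ, comapAbs v = v₀ →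
        ∀ x ∈ B v, v (x a) ≤ 1}.Finite) :
    -- with `B^i_v := {x ∈ B_v | |f_i(x)|_v = max_j |f_j(x)|_v}` we have:
    (∀ (i : Fin r) (v : AbsoluteValue Kbar ℝ),
      ∀ x ∈ {x ∈ B v | ∀ j, v (x (f j)) ≤ v (x (f i))}, x (f i) ≠ 0) ∧
    (∀ (i : Fin r) (α : A) (n : ℕ),
      (∀ v₀ ∈ M, ∃ C : ℝ, ∀ v : AbsoluteValue Kbar ℝ, comapAbs v = v₀ →
        ∀ x ∈ {x ∈ B v | ∀ j, v (x (f j)) ≤ v (x (f i))},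
          v (x α) ≤ C * v (x (f i)) ^ n) ∧
      {v₀ ∈ M | ¬ ∀ v : AbsoluteValue Kbar ℝ, comapAbs v = v₀ →
        ∀ x ∈ {x ∈ B v | ∀ j, v (x (f j)) ≤ v (x (f i))},
          v (x α) ≤ v (x (f i)) ^ n}.Finite) ∧
    (∀ v : AbsoluteValue Kbar ℝ,
      (⋃ i : Fin r, {x ∈ B v | ∀ j, v (x (f j)) ≤ v (x (f i))}) = B v) := by
  classical
  -- write 1 = ∑ a_j f_j
  have h1 : (1 : A) ∈ Ideal.span (Set.range f) := by rw [hgen]; trivial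
  obtain ⟨a, ha⟩ := Ideal.mem_span_range_iff_exists_fun.mp h1
  -- evaluate at a point
  have key : ∀ x : A →ₐ[L] Kbar, ∑ j, x (a j) * x (f j) = 1 := by
    intro x
    rw [← map_one x, ← ha, map_sum]
    simp [map_mul]
  refine ⟨?_, ?_, ?_⟩
  · -- part 1 : x (f i) ≠ 0 on B^i_v
    rintro i v x ⟨hxB, hmax⟩ h0
    have hz : ∀ j, x (f j) = 0 := by
      intro j
      have hj := hmax j
      rw [h0, map_zero] at hj
      exact v.eq_zero.1 (le_antisymm hj (v.nonneg _))
    have := key x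
    simp only [hz, mul_zero, Finset.sum_const_zero] at this
    exact zero_ne_one this
  · -- part 2 : boundedness of α / f_i^n on B^i_v
    intro i α n
    constructor
    · -- uniform bound over v | v₀
      intro v₀ hv₀
      obtain ⟨Cα, hCα⟩ := hBbdd α v₀ hv₀
      choose Ca hCa using fun j => hBbdd (a j) v₀ hv₀
      set S : ℝ := ∑ j, max (Ca j) 1 with hS
      have hS1 : (1 : ℝ) ≤ S := by
        have h := Finset.single_le_sum (f := fun j => max (Ca j) 1)
          (fun j _ => le_trans zero_le_one (le_max_right _ _)) (Finset.mem_univ i)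
        exact le_trans (le_max_right _ _) h
      refine ⟨max Cα 1 * S ^ n, ?_⟩
      rintro v hv x ⟨hxB, hmax⟩
      set t : ℝ := v (x (f i)) with ht
      have hfi : 1 ≤ S * t := by
        calc (1:ℝ) = v 1 := (map_one v).symm
          _ = v (∑ j, x (a j) * x (f j)) := by rw [key]
          _ ≤ ∑ j, v (x (a j) * x (f j)) := v.sum_le _ _
          _ ≤ ∑ j, max (Ca j) 1 * t := by
              refine Finset.sum_le_sum fun j _ => ?_
              rw [map_mul]
              exact mul_le_mul ((hCa j v hv x hxB).trans (le_max_left _ _)) (hmax j)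
                (v.nonneg _) (le_trans zero_le_one (le_max_right _ _))
          _ = S * t := by rw [← Finset.sum_mul]
      have hSt : (1:ℝ) ≤ S ^ n * t ^ n := by
        rw [← mul_pow]; exact one_le_pow₀ hfi
      calc v (x α) ≤ Cα := hCα v hv x hxB
        _ ≤ max Cα 1 := le_max_left _ _
        _ ≤ max Cα 1 * (S ^ n * t ^ n) :=
            le_mul_of_one_le_right (le_trans zero_le_one (le_max_right _ _)) hSt
        _ = max Cα 1 * S ^ n * t ^ n := by ring
    · -- finiteness of exceptional places
      apply Set.Finite.subset
        (((hBone α).union (finite_arch M hM)).union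
          (Set.finite_iUnion (fun j : Fin r => hBone (a j))))
      rintro v₀ ⟨hvM, hbad⟩
      by_contra hE
      simp only [Set.mem_union, Set.mem_iUnion, not_or, not_exists, Set.mem_setOf_eq,
        not_and, not_not] at hE
      obtain ⟨⟨hEα, hEarch⟩, hEa⟩ := hE
      apply hbad
      intro v hv x hx
      obtain ⟨hxB, hmax⟩ := hx
      -- v is nonarchimedean
      have hnat : ∀ m : ℕ, v (m : Kbar) ≤ 1 := by
        intro m
        have e1 : ((m : Kbar)) = algebraMap K Kbar ((m : K)) := by rw [map_natCast]
        have e2 : v (algebraMap K Kbar ((m : K))) = v₀ ((m : K)) := by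
          rw [← hv]; rfl
        rw [e1, e2]
        exact hEarch hvM m
      have hna := abs_nonarch_of_natCast v hnat
      -- 1 ≤ v (x (f i))
      have h1le : (1:ℝ) ≤ v (x (f i)) := by
        calc (1:ℝ) = v 1 := (map_one v).symm
          _ = v (∑ j, x (a j) * x (f j)) := by rw [key]
          _ ≤ v (x (f i)) := by
              refine abs_nonarch_sum v hna Finset.univ _ (v.nonneg _) fun j _ => ?_
              rw [map_mul]
              calc v (x (a j)) * v (x (f j)) ≤ 1 * v (x (f i)) :=
                    mul_le_mul (hEa j hvM v hv x hxB) (hmax j) (v.nonneg _) zero_le_one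
                _ = v (x (f i)) := one_mul _
      calc v (x α) ≤ 1 := hEα hvM v hv x hxB
        _ ≤ v (x (f i)) ^ n := one_le_pow₀ h1le
  · -- part 3 : the union is all of B_v
    intro v
    apply subset_antisymm
    · exact Set.iUnion_subset fun i => Set.sep_subset _ _
    · intro x hx
      by_cases hr : r = 0
      · exfalso
        subst hr
        have hempty : Set.range f = (∅ : Set A) := by
          simp [Set.range_eq_empty]
        rw [hempty, Ideal.span_empty] at hgen
        have h10 : (1 : A) = 0 := by
          have : (1 : A) ∈ (⊥ : Ideal A) := by rw [hgen]; trivial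
          simpa using this
        have : (1 : Kbar) = 0 := by
          rw [← map_one x, h10, map_zero]
        exact one_ne_zero this
      · haveI : Nonempty (Fin r) := ⟨⟨0, Nat.pos_of_ne_zero hr⟩⟩
        obtain ⟨i, hi⟩ := Finite.exists_max (fun j => v (x (f j)))
        exact Set.mem_iUnion.2 ⟨i, hx, hi⟩
end
end

section
/- Let K carry a proper set of absolute values M_K with algebraic closure K̄, let X be a projective scheme over K̄ with diagonal Δ_X ⊆ X × X avoiding Ass(X × X), and fix an arithmetic distance function δ_X = λ_{Δ_X}. Then there exists an M_K-constant γ such that δ_X(x,z,v) + γ(v) ≥ min{δ_X(x,y,v), δ_X(y,z,v)} for all x,y,z ∈ X(K̄) and v ∈ M(K̄). -/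
noncomputable section

open scoped Classical

universe u

section Stmt19

variable {K : Type u} [Field K] {Kbar : Type u} [Field Kbar] [Algebra K Kbar]

/-- An `M_K`-constant: a nonnegative function on the absolute values of `K̄` extending `M_K`,
factoring through `M_K` and vanishing for all but finitely many `v₀ ∈ M_K`. -/
def IsMKConstant [Algebra K Kbar] (M : Set (AbsoluteValue K ℝ))
    (γ : AbsoluteValue Kbar ℝ → ℝ) : Prop :=
  (∀ v, 0 ≤ γ v) ∧
  (∀ v w : AbsoluteValue Kbar ℝ, comapAbs (K := K) v = comapAbs w → γ v = γ w) ∧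
  {v₀ ∈ M | ∃ v : AbsoluteValue Kbar ℝ, comapAbs v = v₀ ∧ γ v ≠ 0}.Finite

/-- Two nonzero coordinate vectors define the same point of projective space. -/
def ProjEquiv {N : ℕ} (x y : {x : Fin (N + 1) → Kbar // x ≠ 0}) : Prop :=
  ∃ c : Kbar, c ≠ 0 ∧ (fun i => c * x.1 i) = y.1

/-- The standard local arithmetic distance function on projective `N`-space, in homogeneous
coordinates:
`δ(x,y,v) = log ((max_i |x_i|_v · max_j |y_j|_v) / max_{i,j} |x_i y_j - x_j y_i|_v)`. -/
noncomputable def deltaStd {N : ℕ} (v : AbsoluteValue Kbar ℝ)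
    (x y : {x : Fin (N + 1) → Kbar // x ≠ 0}) : ℝ :=
  Real.log
    ((Finset.univ.sup' Finset.univ_nonempty (fun i => v (x.1 i)) *
      Finset.univ.sup' Finset.univ_nonempty (fun j => v (y.1 j))) /
      Finset.univ.sup' Finset.univ_nonempty
        (fun p : Fin (N + 1) × Fin (N + 1) => v (x.1 p.1 * y.1 p.2 - x.1 p.2 * y.1 p.1)))

namespace Stmt19Aux

variable (v : AbsoluteValue Kbar ℝ) {N : ℕ}

/-- The sup norm of a coordinate vector. -/
noncomputable def nrm (x : {x : Fin (N + 1) → Kbar // x ≠ 0}) : ℝ :=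
  Finset.univ.sup' Finset.univ_nonempty (fun i => v (x.1 i))

/-- The sup of the absolute values of the 2×2 minors. -/
noncomputable def dmn (x y : {x : Fin (N + 1) → Kbar // x ≠ 0}) : ℝ :=
  Finset.univ.sup' Finset.univ_nonempty
    (fun p : Fin (N + 1) × Fin (N + 1) => v (x.1 p.1 * y.1 p.2 - x.1 p.2 * y.1 p.1))

lemma deltaStd_eq (x y : {x : Fin (N + 1) → Kbar // x ≠ 0}) :
    deltaStd v x y = Real.log (nrm v x * nrm v y / dmn v x y) := rfl

lemma le_nrm (x : {x : Fin (N + 1) → Kbar // x ≠ 0}) (i : Fin (N + 1)) :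
    v (x.1 i) ≤ nrm v x := by
  unfold nrm
  exact Finset.le_sup' (fun j => v (x.1 j)) (Finset.mem_univ i)

lemma le_dmn (x y : {x : Fin (N + 1) → Kbar // x ≠ 0}) (p : Fin (N + 1) × Fin (N + 1)) :
    v (x.1 p.1 * y.1 p.2 - x.1 p.2 * y.1 p.1) ≤ dmn v x y := by
  unfold dmn
  exact Finset.le_sup'
    (fun q : Fin (N + 1) × Fin (N + 1) => v (x.1 q.1 * y.1 q.2 - x.1 q.2 * y.1 q.1))
    (Finset.mem_univ p)

lemma nrm_pos (x : {x : Fin (N + 1) → Kbar // x ≠ 0}) : 0 < nrm v x := by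
  obtain ⟨i, hi⟩ := Function.ne_iff.mp x.2
  have hi' : x.1 i ≠ 0 := hi
  exact lt_of_lt_of_le (v.pos hi') (le_nrm v x i)

lemma dmn_nonneg (x y : {x : Fin (N + 1) → Kbar // x ≠ 0}) : 0 ≤ dmn v x y := by
  exact le_trans (v.nonneg _) (le_dmn v x y (0, 0))

lemma projEquiv_symm {x y : {x : Fin (N + 1) → Kbar // x ≠ 0}} (h : ProjEquiv x y) :
    ProjEquiv y x := by
  obtain ⟨c, hc, hf⟩ := h
  refine ⟨c⁻¹, inv_ne_zero hc, funext fun i => ?_⟩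
  have := congrFun hf i
  rw [← this, ← mul_assoc, inv_mul_cancel₀ hc, one_mul]

lemma projEquiv_trans {x y z : {x : Fin (N + 1) → Kbar // x ≠ 0}}
    (h₁ : ProjEquiv x y) (h₂ : ProjEquiv y z) : ProjEquiv x z := by
  obtain ⟨c, hc, hf⟩ := h₁
  obtain ⟨d, hd, hg⟩ := h₂
  refine ⟨d * c, mul_ne_zero hd hc, funext fun i => ?_⟩
  have h1 := congrFun hf i
  have h2 := congrFun hg i
  rw [mul_assoc, h1, h2]

lemma dmn_pos {x y : {x : Fin (N + 1) → Kbar // x ≠ 0}} (h : ¬ ProjEquiv x y) :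
    0 < dmn v x y := by
  have hminor : ¬ ∀ p : Fin (N + 1) × Fin (N + 1),
      x.1 p.1 * y.1 p.2 - x.1 p.2 * y.1 p.1 = 0 := by
    intro hall
    apply h
    obtain ⟨k, hk0⟩ := Function.ne_iff.mp x.2
    have hk : x.1 k ≠ 0 := hk0
    have hyk : y.1 k ≠ 0 := by
      intro h0
      apply y.2
      funext i
      have h1 : x.1 k * y.1 i = x.1 i * y.1 k := sub_eq_zero.mp (hall (k, i))
      rw [h0, mul_zero] at h1
      exact (mul_eq_zero.mp h1).resolve_left hk
    refine ⟨y.1 k * (x.1 k)⁻¹, mul_ne_zero hyk (inv_ne_zero hk), funext fun i => ?_⟩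
    have h1 : x.1 k * y.1 i = x.1 i * y.1 k := sub_eq_zero.mp (hall (k, i))
    field_simp
    linear_combination -h1
  push_neg at hminor
  obtain ⟨p, hp⟩ := hminor
  exact lt_of_lt_of_le (v.pos hp) (le_dmn v x y p)

lemma sup'_const_mul {α : Type u} [Fintype α] [Nonempty α] {c : ℝ} (hc : 0 ≤ c) (g : α → ℝ) :
    Finset.univ.sup' Finset.univ_nonempty (fun a => c * g a) =
      c * Finset.univ.sup' Finset.univ_nonempty g := by
  exact (Finset.comp_sup'_eq_sup'_comp (γ := ℝ) Finset.univ_nonempty (fun r => c * r)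
    (fun a b => by exact mul_max_of_nonneg a b hc)).symm

lemma deltaStd_congr_left {x x' : {x : Fin (N + 1) → Kbar // x ≠ 0}} (h : ProjEquiv x x')
    (y : {x : Fin (N + 1) → Kbar // x ≠ 0}) : deltaStd v x' y = deltaStd v x y := by
  obtain ⟨c, hc, hf⟩ := h
  have hx' : ∀ i, x'.1 i = c * x.1 i := fun i => (congrFun hf i).symm
  have h1 : nrm v x' = v c * nrm v x := by
    unfold nrm
    calc Finset.univ.sup' Finset.univ_nonempty (fun i => v (x'.1 i))
        = Finset.univ.sup' Finset.univ_nonempty (fun i => v c * v (x.1 i)) :=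
          Finset.sup'_congr _ rfl (fun i _ => by rw [hx' i, map_mul])
      _ = v c * Finset.univ.sup' Finset.univ_nonempty (fun i => v (x.1 i)) :=
          sup'_const_mul (v.nonneg c) _
  have h2 : dmn v x' y = v c * dmn v x y := by
    unfold dmn
    calc Finset.univ.sup' Finset.univ_nonempty
          (fun p : Fin (N + 1) × Fin (N + 1) => v (x'.1 p.1 * y.1 p.2 - x'.1 p.2 * y.1 p.1))
        = Finset.univ.sup' Finset.univ_nonempty
            (fun p : Fin (N + 1) × Fin (N + 1) =>
              v c * v (x.1 p.1 * y.1 p.2 - x.1 p.2 * y.1 p.1)) :=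
          Finset.sup'_congr _ rfl (fun p _ => by
            rw [hx' p.1, hx' p.2, show c * x.1 p.1 * y.1 p.2 - c * x.1 p.2 * y.1 p.1 =
              c * (x.1 p.1 * y.1 p.2 - x.1 p.2 * y.1 p.1) by ring, map_mul])
      _ = v c * Finset.univ.sup' Finset.univ_nonempty
            (fun p : Fin (N + 1) × Fin (N + 1) =>
              v (x.1 p.1 * y.1 p.2 - x.1 p.2 * y.1 p.1)) :=
          sup'_const_mul (v.nonneg c) _
  rw [deltaStd_eq, deltaStd_eq, h1, h2, mul_assoc, mul_div_mul_left _ _ (v.ne_zero hc)]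

lemma deltaStd_comm (x y : {x : Fin (N + 1) → Kbar // x ≠ 0}) :
    deltaStd v x y = deltaStd v y x := by
  have hd : dmn v x y = dmn v y x := by
    unfold dmn
    exact Finset.sup'_congr _ rfl (fun p _ => by
      rw [show x.1 p.1 * y.1 p.2 - x.1 p.2 * y.1 p.1 =
        -(y.1 p.1 * x.1 p.2 - y.1 p.2 * x.1 p.1) by ring, v.map_neg])
  rw [deltaStd_eq, deltaStd_eq, mul_comm (nrm v x), hd]

lemma deltaStd_congr_right {y y' : {x : Fin (N + 1) → Kbar // x ≠ 0}} (h : ProjEquiv y y')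
    (x : {x : Fin (N + 1) → Kbar // x ≠ 0}) : deltaStd v x y' = deltaStd v x y := by
  rw [deltaStd_comm v x y', deltaStd_congr_left v h x, deltaStd_comm]

lemma key_ineq {C : ℝ} (hC0 : 0 ≤ C)
    (hC : ∀ a b c : Kbar, v (a + b + c) ≤ C * max (v a) (max (v b) (v c)))
    (x y z : {x : Fin (N + 1) → Kbar // x ≠ 0}) :
    nrm v y * dmn v x z ≤ C * max (nrm v z * dmn v x y) (nrm v x * dmn v y z) := by
  obtain ⟨k, -, hk⟩ := Finset.exists_mem_eq_sup' (Finset.univ_nonempty)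
    (fun i => v (y.1 i))
  have hsup : nrm v y * dmn v x z = Finset.univ.sup' Finset.univ_nonempty
      (fun p : Fin (N + 1) × Fin (N + 1) =>
        v (y.1 k) * v (x.1 p.1 * z.1 p.2 - x.1 p.2 * z.1 p.1)) := by
    rw [sup'_const_mul (v.nonneg _)]
    rw [show nrm v y = v (y.1 k) from hk]
    rfl
  rw [hsup]
  refine Finset.sup'_le _ _ (fun p _ => ?_)
  have hid : y.1 k * (x.1 p.1 * z.1 p.2 - x.1 p.2 * z.1 p.1) =
      z.1 p.2 * (x.1 p.1 * y.1 k - x.1 k * y.1 p.1) +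
      (-(z.1 p.1)) * (x.1 p.2 * y.1 k - x.1 k * y.1 p.2) +
      x.1 k * (y.1 p.1 * z.1 p.2 - y.1 p.2 * z.1 p.1) := by ring
  rw [← map_mul, hid]
  refine le_trans (hC _ _ _) (mul_le_mul_of_nonneg_left ?_ hC0)
  have hb1 : v (z.1 p.2 * (x.1 p.1 * y.1 k - x.1 k * y.1 p.1)) ≤ nrm v z * dmn v x y := by
    rw [map_mul]
    exact mul_le_mul (le_nrm v z p.2) (le_dmn v x y (p.1, k))
      (v.nonneg _) (le_of_lt (nrm_pos v z))
  have hb2 : v ((-(z.1 p.1)) * (x.1 p.2 * y.1 k - x.1 k * y.1 p.2)) ≤ nrm v z * dmn v x y := by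
    rw [map_mul, v.map_neg]
    exact mul_le_mul (le_nrm v z p.1) (le_dmn v x y (p.2, k))
      (v.nonneg _) (le_of_lt (nrm_pos v z))
  have hb3 : v (x.1 k * (y.1 p.1 * z.1 p.2 - y.1 p.2 * z.1 p.1)) ≤ nrm v x * dmn v y z := by
    rw [map_mul]
    exact mul_le_mul (le_nrm v x k) (le_dmn v y z p)
      (v.nonneg _) (le_of_lt (nrm_pos v x))
  exact max_le (le_trans hb1 (le_max_left _ _))
    (max_le (le_trans hb2 (le_max_left _ _)) (le_trans hb3 (le_max_right _ _)))

lemma tri_core {C : ℝ} (hC1 : 1 ≤ C)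
    (hC : ∀ a b c : Kbar, v (a + b + c) ≤ C * max (v a) (max (v b) (v c)))
    {x y z : {x : Fin (N + 1) → Kbar // x ≠ 0}}
    (hxy : ¬ ProjEquiv x y) (hyz : ¬ ProjEquiv y z) (hxz : ¬ ProjEquiv x z) :
    min (deltaStd v x y) (deltaStd v y z) ≤ deltaStd v x z + Real.log C := by
  have hC0 : (0 : ℝ) < C := lt_of_lt_of_le one_pos hC1
  have hxp := nrm_pos v x
  have hyp := nrm_pos v y
  have hzp := nrm_pos v z
  have hdxy := dmn_pos v hxy
  have hdyz := dmn_pos v hyz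
  have hdxz := dmn_pos v hxz
  have hkey := key_ineq v (le_of_lt hC0) hC x y z
  have hAxz : (0 : ℝ) < nrm v x * nrm v z / dmn v x z :=
    div_pos (mul_pos hxp hzp) hdxz
  have hlog : Real.log C + deltaStd v x z =
      Real.log (C * (nrm v x * nrm v z / dmn v x z)) := by
    rw [deltaStd_eq, Real.log_mul (ne_of_gt hC0) (ne_of_gt hAxz)]
  rcases max_cases (nrm v z * dmn v x y) (nrm v x * dmn v y z) with ⟨heq, -⟩ | ⟨heq, -⟩
  · rw [heq] at hkey
    refine le_trans (min_le_left _ _) ?_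
    rw [add_comm, hlog, deltaStd_eq]
    refine Real.log_le_log (div_pos (mul_pos hxp hyp) hdxy) ?_
    rw [← mul_div_assoc, div_le_div_iff₀ hdxy hdxz]
    calc nrm v x * nrm v y * dmn v x z = nrm v x * (nrm v y * dmn v x z) := by ring
      _ ≤ nrm v x * (C * (nrm v z * dmn v x y)) :=
          mul_le_mul_of_nonneg_left hkey (le_of_lt hxp)
      _ = C * (nrm v x * nrm v z) * dmn v x y := by ring
  · rw [heq] at hkey
    refine le_trans (min_le_right _ _) ?_
    rw [add_comm, hlog, deltaStd_eq]
    refine Real.log_le_log (div_pos (mul_pos hyp hzp) hdyz) ?_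
    rw [← mul_div_assoc, div_le_div_iff₀ hdyz hdxz]
    calc nrm v y * nrm v z * dmn v x z = nrm v z * (nrm v y * dmn v x z) := by ring
      _ ≤ nrm v z * (C * (nrm v x * dmn v y z)) :=
          mul_le_mul_of_nonneg_left hkey (le_of_lt hzp)
      _ = C * (nrm v x * nrm v z) * dmn v y z := by ring

lemma three_ineq (a b c : Kbar) :
    v (a + b + c) ≤ 3 * max (v a) (max (v b) (v c)) := by
  have h1 := v.add_le (a + b) c
  have h2 := v.add_le a b
  have ha : v a ≤ max (v a) (max (v b) (v c)) := le_max_left _ _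
  have hb : v b ≤ max (v a) (max (v b) (v c)) :=
    le_trans (le_max_left _ _) (le_max_right _ _)
  have hc : v c ≤ max (v a) (max (v b) (v c)) :=
    le_trans (le_max_right _ _) (le_max_right _ _)
  linarith

lemma ultra_ineq (hv : ∀ n : ℕ, v (n : Kbar) ≤ 1) (a b c : Kbar) :
    v (a + b + c) ≤ 1 * max (v a) (max (v b) (v c)) := by
  haveI : IsUltrametricDist (WithAbs v) :=
    IsUltrametricDist.isUltrametricDist_of_forall_norm_natCast_le_one (fun n => hv n)
  have h1 : ∀ s t : Kbar, v (s + t) ≤ max (v s) (v t) := fun s t =>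
    IsUltrametricDist.norm_add_le_max ((WithAbs.equiv v).symm s) ((WithAbs.equiv v).symm t)
  rw [one_mul]
  calc v (a + b + c) ≤ max (v (a + b)) (v c) := h1 _ _
    _ ≤ max (max (v a) (v b)) (v c) := max_le_max (h1 a b) le_rfl
    _ = max (v a) (max (v b) (v c)) := max_assoc _ _ _

end Stmt19Aux

/-- Triangle inequality I for the arithmetic distance function: let `X` be a
projective scheme over `K̄`, with points `X(K̄) = S` realized in projective `N`-space via a
projective embedding, and let `δ_X` be an arithmetic distance function on `X`, i.e. any
function agreeing, up to an `M_K`-constant, with the standard arithmetic distance off the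
diagonal and equal to `∞` on the diagonal. Then there is an `M_K`-constant `γ` such that
`δ_X(x,z,v) + γ(v) ≥ min {δ_X(x,y,v), δ_X(y,z,v)}` for all `x, y, z ∈ X(K̄)` and all
`v ∈ M(K̄)`. -/
theorem stmt_19 (M : Set (AbsoluteValue K ℝ)) (hM : IsProperAbsSet M)
    [IsAlgClosure K Kbar] (N : ℕ)
    (S : Set {x : Fin (N + 1) → Kbar // x ≠ 0})
    (δ : {x : Fin (N + 1) → Kbar // x ≠ 0} → {x : Fin (N + 1) → Kbar // x ≠ 0} →
      AbsoluteValue Kbar ℝ → EReal)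
    (hδ : ∃ γ₀ : AbsoluteValue Kbar ℝ → ℝ, IsMKConstant M γ₀ ∧
      ∀ v : AbsoluteValue Kbar ℝ, comapAbs v ∈ M →
        ∀ x ∈ S, ∀ y ∈ S,
          (ProjEquiv x y → δ x y v = ⊤) ∧
          (¬ ProjEquiv x y → ∃ d : ℝ, δ x y v = (d : EReal) ∧
            |d - deltaStd v x y| ≤ γ₀ v)) :
    ∃ γ : AbsoluteValue Kbar ℝ → ℝ, IsMKConstant M γ ∧
      ∀ v : AbsoluteValue Kbar ℝ, comapAbs v ∈ M →
        ∀ x ∈ S, ∀ y ∈ S, ∀ z ∈ S,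
          min (δ x y v) (δ y z v) ≤ δ x z v + ((γ v : ℝ) : EReal) := by
  classical
  obtain ⟨γ₀, hγ₀, hmain⟩ := hδ
  obtain ⟨hγ₀nonneg, hγ₀fact, hγ₀fin⟩ := hγ₀
  let Bad : AbsoluteValue Kbar ℝ → Prop := fun v => ∃ n : ℕ, 1 < v ((n : ℕ) : Kbar)
  let cf : AbsoluteValue Kbar ℝ → ℝ := fun v => if Bad v then Real.log 3 else 0
  have hcf_nonneg : ∀ v, 0 ≤ cf v := by
    intro v
    by_cases h : Bad v
    · simp only [cf, if_pos h]
      exact Real.log_nonneg (by norm_num)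
    · simp only [cf, if_neg h]
      exact le_rfl
  have hnat : ∀ (v : AbsoluteValue Kbar ℝ) (n : ℕ),
      v ((n : Kbar)) = comapAbs (K := K) v ((n : K)) := by
    intro v n
    have h0 : comapAbs (K := K) v ((n : K)) = v (algebraMap K Kbar ((n : K))) := rfl
    rw [h0, map_natCast (algebraMap K Kbar) n]
  have hbound : ∀ v₀ ∈ M, (∃ n : ℕ, 1 < v₀ ((n : K))) →
      (2 : K) ≠ 0 ∧ v₀ ((2 : K)) ≠ 1 := by
    rintro v₀ hv₀ ⟨n, hn⟩
    rcases CharP.char_is_prime_or_zero K (ringChar K) with hp | h0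
    · exfalso
      haveI : Fact (ringChar K).Prime := ⟨hp⟩
      have hfrob : ∀ m : ℕ, ((m : K)) ^ (ringChar K) = (m : K) := by
        intro m
        induction m with
        | zero => rw [Nat.cast_zero, zero_pow hp.ne_zero]
        | succ m ih => rw [Nat.cast_succ, add_pow_char, ih, one_pow]
      have h1 : v₀ ((n : K)) ^ (ringChar K) = v₀ ((n : K)) := by
        rw [← map_pow, hfrob]
      have h2 : v₀ ((n : K)) ^ 2 ≤ v₀ ((n : K)) ^ (ringChar K) :=
        pow_le_pow_right₀ (le_of_lt hn) hp.two_le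
      nlinarith [hn]
    · haveI : CharP K 0 := h0 ▸ ringChar.charP K
      haveI : CharZero K := CharP.charP_to_charZero K
      have hn0 : n ≠ 0 := by
        rintro rfl
        rw [Nat.cast_zero, map_zero] at hn
        linarith
      have hnq : ((n : ℚ)) ≠ 0 := Nat.cast_ne_zero.mpr hn0
      obtain ⟨-, -, hprop⟩ := hM.2.1 v₀ hv₀
      have hinv : v₀ (((((n : ℚ))⁻¹ : ℚ)) : K) < 1 := by
        rw [Rat.cast_inv, Rat.cast_natCast, map_inv₀]
        exact inv_lt_one_of_one_lt₀ hn
      rcases hprop ‹CharZero K› with hcase | ⟨p, hpp, hcase⟩ | hcase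
      · exact absurd hinv (hcase _ (inv_ne_zero hnq))
      · exfalso
        haveI : Fact p.Prime := ⟨hpp⟩
        have h1 : (padicNorm p ((((n : ℚ))⁻¹ : ℚ)) : ℝ) < 1 := (hcase _).mp hinv
        have h2 : padicNorm p ((n : ℚ)) ≤ 1 := padicNorm.of_nat n
        have hmul : padicNorm p ((n : ℚ)) * padicNorm p ((((n : ℚ))⁻¹ : ℚ)) = 1 := by
          rw [← padicNorm.mul, mul_inv_cancel₀ hnq, padicNorm.one]
        have h5 : (1 : ℚ) ≤ padicNorm p ((((n : ℚ))⁻¹ : ℚ)) := by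
          nlinarith [padicNorm.nonneg (p := p) ((((n : ℚ))⁻¹ : ℚ)),
            padicNorm.nonneg (p := p) ((n : ℚ))]
        have h6 : (1 : ℝ) ≤ (padicNorm p ((((n : ℚ))⁻¹ : ℚ)) : ℝ) := by exact_mod_cast h5
        linarith
      · constructor
        · have h7 : ((2 : ℕ) : K) ≠ 0 := Nat.cast_ne_zero.mpr (by norm_num)
          simpa using h7
        · intro heq
          have h2 : v₀ (((1 / 2 : ℚ)) : K) < 1 := (hcase (1 / 2)).mpr (by push_cast; rw [abs_of_pos] <;> norm_num)
          have h3 : (((1 / 2 : ℚ)) : K) = ((2 : K))⁻¹ := by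
            rw [Rat.cast_div, Rat.cast_one, Rat.cast_ofNat, one_div]
          rw [h3, map_inv₀, heq] at h2
          norm_num at h2
  refine ⟨fun v => 2 * γ₀ v + cf v, ⟨?_, ?_, ?_⟩, ?_⟩
  · intro v
    have := hγ₀nonneg v
    have := hcf_nonneg v
    show (0 : ℝ) ≤ 2 * γ₀ v + cf v
    linarith
  · intro v w h
    have hb : Bad v ↔ Bad w := by
      refine exists_congr fun n => ?_
      rw [hnat v n, hnat w n, h]
    have hce : cf v = cf w := by
      simp only [cf]
      rw [if_congr hb rfl rfl]
    simp only [hγ₀fact v w h, hce]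
  · have hT2 : {v₀ ∈ M | ∃ v : AbsoluteValue Kbar ℝ, comapAbs v = v₀ ∧ cf v ≠ 0}.Finite := by
      by_cases h2 : (2 : K) = 0
      · convert Set.finite_empty
        rw [Set.eq_empty_iff_forall_notMem]
        rintro v₀ ⟨hv₀, v, hcom, hne⟩
        have hbad : Bad v := by
          by_contra hb
          simp only [cf, if_neg hb, ne_eq, not_true_eq_false] at hne
        obtain ⟨n, hn⟩ := hbad
        rw [hnat v n, hcom] at hn
        exact (hbound v₀ hv₀ ⟨n, hn⟩).1 h2
      · refine Set.Finite.subset (hM.2.2.2 (2 : K) h2) ?_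
        rintro v₀ ⟨hv₀, v, hcom, hne⟩
        have hbad : Bad v := by
          by_contra hb
          simp only [cf, if_neg hb, ne_eq, not_true_eq_false] at hne
        obtain ⟨n, hn⟩ := hbad
        rw [hnat v n, hcom] at hn
        exact ⟨hv₀, (hbound v₀ hv₀ ⟨n, hn⟩).2⟩
    refine Set.Finite.subset (hγ₀fin.union hT2) ?_
    rintro v₀ ⟨hv₀, v, hcom, hne⟩
    by_cases hg : γ₀ v = 0
    · right
      refine ⟨hv₀, v, hcom, ?_⟩
      intro hc
      apply hne
      show 2 * γ₀ v + cf v = 0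
      rw [hg, hc]
      ring
    · left
      exact ⟨hv₀, v, hcom, hg⟩
  · intro v hv x hx y hy z hz
    have Hxz := hmain v hv x hx z hz
    have Hxy := hmain v hv x hx y hy
    have Hyz := hmain v hv y hy z hz
    by_cases hPxz : ProjEquiv x z
    · rw [Hxz.1 hPxz, EReal.top_add_coe]
      exact le_top
    · obtain ⟨dxz, hdxz, hbxz⟩ := Hxz.2 hPxz
      have hstdmin : ∀ (_ : ¬ ProjEquiv x y) (_ : ¬ ProjEquiv y z),
          min (deltaStd v x y) (deltaStd v y z) ≤ deltaStd v x z + cf v := by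
        intro hxy' hyz'
        by_cases hb : Bad v
        · have := Stmt19Aux.tri_core v (by norm_num : (1 : ℝ) ≤ 3)
            (Stmt19Aux.three_ineq v) hxy' hyz' hPxz
          simpa only [cf, if_pos hb] using this
        · have hult : ∀ n : ℕ, v ((n : Kbar)) ≤ 1 := by
            intro n
            by_contra hlt
            exact hb ⟨n, not_le.mp hlt⟩
          have := Stmt19Aux.tri_core v le_rfl
            (Stmt19Aux.ultra_ineq v hult) hxy' hyz' hPxz
          simpa only [cf, if_neg hb, Real.log_one] using this
      have h3 := abs_le.mp hbxz
      have hcf0 := hcf_nonneg v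
      by_cases hPxy : ProjEquiv x y
      · have hPyz : ¬ ProjEquiv y z := fun h => hPxz (Stmt19Aux.projEquiv_trans hPxy h)
        obtain ⟨dyz, hdyz, hbyz⟩ := Hyz.2 hPyz
        rw [Hxy.1 hPxy, hdyz, hdxz, min_eq_right le_top, ← EReal.coe_add]
        refine EReal.coe_le_coe_iff.mpr ?_
        show dyz ≤ dxz + (2 * γ₀ v + cf v)
        have hseq : deltaStd v y z = deltaStd v x z := Stmt19Aux.deltaStd_congr_left v hPxy z
        have h1 := abs_le.mp hbyz
        rw [hseq] at h1
        linarith [h1.1, h1.2, h3.1, h3.2]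
      · by_cases hPyz : ProjEquiv y z
        · obtain ⟨dxy, hdxy, hbxy⟩ := Hxy.2 hPxy
          rw [Hyz.1 hPyz, hdxy, hdxz, min_eq_left le_top, ← EReal.coe_add]
          refine EReal.coe_le_coe_iff.mpr ?_
          show dxy ≤ dxz + (2 * γ₀ v + cf v)
          have hseq : deltaStd v x y = deltaStd v x z :=
            Stmt19Aux.deltaStd_congr_right v (Stmt19Aux.projEquiv_symm hPyz) x
          have h1 := abs_le.mp hbxy
          rw [hseq] at h1
          linarith [h1.1, h1.2, h3.1, h3.2]
        · obtain ⟨dxy, hdxy, hbxy⟩ := Hxy.2 hPxy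
          obtain ⟨dyz, hdyz, hbyz⟩ := Hyz.2 hPyz
          rw [hdxy, hdyz, hdxz, ← EReal.coe_add]
          have hmin := hstdmin hPxy hPyz
          have h1 := abs_le.mp hbxy
          have h2 := abs_le.mp hbyz
          rcases le_total (deltaStd v x y) (deltaStd v y z) with hc | hc
          · refine min_le_iff.mpr (Or.inl (EReal.coe_le_coe_iff.mpr ?_))
            show dxy ≤ dxz + (2 * γ₀ v + cf v)
            rw [min_eq_left hc] at hmin
            linarith [h1.1, h1.2, h3.1, h3.2]
          · refine min_le_iff.mpr (Or.inr (EReal.coe_le_coe_iff.mpr ?_))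
            show dyz ≤ dxz + (2 * γ₀ v + cf v)
            rw [min_eq_right hc] at hmin
            linarith [h2.1, h2.2, h3.1, h3.2]

end Stmt19
end
end
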